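/- arXiv:1506.08382 — 6 statements merged into one kernel-verified Lean document; each statement's English description precedes it below -/
import Mathlib

section
/- For every positive integer m and every real number c > 1, f(m,c) lies in the open interval (0,1), satisfies f(m,c) = e^{-c(1 - f(m,c)^m)/m}, and is the unique y ∈ (0,1) satisfying y = e^{-c(1-y^m)/m}. -/
set_option maxHeartbeats 1000000

open Finset

/-- Alternating sum of binomial coefficients times `k^j` vanishes for `j < n`. -/
lemma diffZero : ∀ n : ℕ, ∀ j : ℕ, j < n →
    ∑ k ∈ range (n + 1), (-1 : ℝ) ^ k * (n.choose k : ℝ) * (k : ℝ) ^ j = 0 := by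
  intro n
  induction n using Nat.strong_induction_on with
  | _ n ih =>
    intro j hj
    match n, hj with
    | n + 1, hj =>
      match j with
      | 0 =>
          have h := @Int.alternating_sum_range_choose (n + 1)
          rw [if_neg (Nat.succ_ne_zero n)] at h
          have := congrArg (fun z : ℤ => (z : ℝ)) h
          push_cast at this ⊢
          simpa using this
      | j + 1 =>
          have hjn : j < n := by omega
          have key : ∀ k,
              (-1 : ℝ) ^ (k + 1) * ((n + 1).choose (k + 1) : ℝ) * (((k : ℝ) + 1)) ^ (j + 1)
                = -(((n : ℝ) + 1)) * ((-1 : ℝ) ^ k * (n.choose k : ℝ) * ((k : ℝ) + 1) ^ j) := by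
            intro k
            have h1 : (((n + 1).choose (k + 1) : ℝ)) * ((k : ℝ) + 1)
                = ((n : ℝ) + 1) * (n.choose k : ℝ) := by
              have h2 := congrArg (fun z : ℕ => (z : ℝ)) (Nat.add_one_mul_choose_eq n k)
              push_cast at h2
              linarith [h2]
            linear_combination ((-1 : ℝ) ^ (k + 1) * ((k : ℝ) + 1) ^ j) * h1
          rw [Finset.sum_range_succ']
          simp only [Nat.cast_zero, ne_eq, Nat.succ_ne_zero, not_false_iff,
            zero_pow (Nat.succ_ne_zero j), mul_zero, add_zero]
          have step : ∀ k, (-1 : ℝ) ^ (k + 1) * ((n + 1).choose (k + 1) : ℝ) * ((k + 1 : ℕ) : ℝ) ^ (j + 1)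
              = -(((n : ℝ) + 1)) * ((-1 : ℝ) ^ k * (n.choose k : ℝ) * ((k : ℝ) + 1) ^ j) := by
            intro k
            have := key k
            push_cast
            convert this using 3
          rw [Finset.sum_congr rfl fun k _ => step k, ← Finset.mul_sum]
          have expand : ∀ k : ℕ, ((k : ℝ) + 1) ^ j
              = ∑ r ∈ range (j + 1), (k : ℝ) ^ r * (j.choose r : ℝ) := by
            intro k
            rw [add_pow]
            exact Finset.sum_congr rfl fun r _ => by ring
          have : ∑ k ∈ range (n + 1), (-1 : ℝ) ^ k * (n.choose k : ℝ) * ((k : ℝ) + 1) ^ j = 0 := by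
            calc ∑ k ∈ range (n + 1), (-1 : ℝ) ^ k * (n.choose k : ℝ) * ((k : ℝ) + 1) ^ j
                = ∑ k ∈ range (n + 1), ∑ r ∈ range (j + 1),
                    (j.choose r : ℝ) * ((-1 : ℝ) ^ k * (n.choose k : ℝ) * (k : ℝ) ^ r) := by
                  refine Finset.sum_congr rfl fun k _ => ?_
                  rw [expand k, Finset.mul_sum]
                  exact Finset.sum_congr rfl fun r _ => by ring
              _ = ∑ r ∈ range (j + 1), (j.choose r : ℝ) *
                    ∑ k ∈ range (n + 1), (-1 : ℝ) ^ k * (n.choose k : ℝ) * (k : ℝ) ^ r := by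
                  rw [Finset.sum_comm]
                  exact Finset.sum_congr rfl fun r _ => by rw [Finset.mul_sum]
              _ = 0 := by
                  refine Finset.sum_eq_zero fun r hr => ?_
                  rw [ih n (by omega) r (by simp at hr; omega), mul_zero]
          rw [this, mul_zero]

noncomputable def Sabel (mr : ℝ) (n : ℕ) (y : ℝ) : ℝ :=
  ∑ k ∈ range (n + 1), (n.choose k : ℝ) * ((k : ℝ) * mr + 1) ^ (k - 1) * (y - k * mr) ^ (n - k)

lemma Sabel_neg_one (mr : ℝ) (n : ℕ) (hn : n ≠ 0) : Sabel mr n (-1) = 0 := by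
  have key : ∀ k ∈ range (n + 1),
      (n.choose k : ℝ) * ((k : ℝ) * mr + 1) ^ (k - 1) * ((-1 : ℝ) - k * mr) ^ (n - k)
        = ∑ r ∈ range n, ((n - 1).choose r : ℝ) * mr ^ r * (-1 : ℝ) ^ n *
            ((-1 : ℝ) ^ k * (n.choose k : ℝ) * (k : ℝ) ^ r) := by
    intro k hk
    have hkn : k ≤ n := by simpa using Nat.lt_succ_iff.mp (Finset.mem_range.mp hk)
    have h1 : ((-1 : ℝ) - k * mr) = -((k : ℝ) * mr + 1) := by ring
    rw [h1, neg_pow]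
    have h2 : ((k : ℝ) * mr + 1) ^ (k - 1) * ((k : ℝ) * mr + 1) ^ (n - k)
        = ((k : ℝ) * mr + 1) ^ (n - 1) := by
      rcases Nat.eq_zero_or_pos k with rfl | hk0
      · simp
      · rw [← pow_add]; congr 1; omega
    have h3 : ((k : ℝ) * mr + 1) ^ (n - 1)
        = ∑ r ∈ range n, ((n - 1).choose r : ℝ) * ((k : ℝ) * mr) ^ r := by
      have := add_pow ((k : ℝ) * mr) 1 (n - 1)
      simp only [one_pow, mul_one] at this
      rw [this]
      have hrange : n - 1 + 1 = n := by omega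
      rw [hrange]
      exact Finset.sum_congr rfl fun r _ => by ring
    have h4 : ((-1 : ℝ)) ^ (n - k) * (-1 : ℝ) ^ k = (-1 : ℝ) ^ n := by
      rw [← pow_add]; congr 1; omega
    calc (n.choose k : ℝ) * ((k : ℝ) * mr + 1) ^ (k - 1) *
          ((-1 : ℝ) ^ (n - k) * ((k : ℝ) * mr + 1) ^ (n - k))
        = (n.choose k : ℝ) * (-1 : ℝ) ^ (n - k) *
            (((k : ℝ) * mr + 1) ^ (k - 1) * ((k : ℝ) * mr + 1) ^ (n - k)) := by ring
      _ = (n.choose k : ℝ) * (-1 : ℝ) ^ (n - k) *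
            ∑ r ∈ range n, ((n - 1).choose r : ℝ) * ((k : ℝ) * mr) ^ r := by rw [h2, h3]
      _ = ∑ r ∈ range n, ((n - 1).choose r : ℝ) * mr ^ r * (-1 : ℝ) ^ n *
            ((-1 : ℝ) ^ k * (n.choose k : ℝ) * (k : ℝ) ^ r) := by
          rw [Finset.mul_sum]
          refine Finset.sum_congr rfl fun r _ => ?_
          have : (-1 : ℝ) ^ (n - k) = (-1 : ℝ) ^ n * (-1 : ℝ) ^ k := by
            have h5 : ((-1 : ℝ)) ^ k * ((-1 : ℝ)) ^ k = 1 := by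
              rw [← pow_add]; simp [pow_add, ← two_mul, pow_mul]
            calc (-1 : ℝ) ^ (n - k) = (-1 : ℝ) ^ (n - k) * ((-1 : ℝ) ^ k * (-1 : ℝ) ^ k) := by
                  rw [h5, mul_one]
              _ = ((-1 : ℝ) ^ (n - k) * (-1 : ℝ) ^ k) * (-1 : ℝ) ^ k := by ring
              _ = (-1 : ℝ) ^ n * (-1 : ℝ) ^ k := by rw [h4]
          rw [this]
          ring
  rw [Sabel, Finset.sum_congr rfl key, Finset.sum_comm]
  refine Finset.sum_eq_zero fun r hr => ?_
  have hrn : r < n := Finset.mem_range.mp hr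
  rw [← Finset.mul_sum, diffZero n r hrn, mul_zero]

lemma Sabel_hasDerivAt (mr : ℝ) (n : ℕ) (y : ℝ) :
    HasDerivAt (Sabel mr (n + 1)) (((n : ℝ) + 1) * Sabel mr n y) y := by
  have natlem : ∀ k, k ≤ n → (n + 1 - k) * (n + 1).choose k = (n + 1) * n.choose k := by
    intro k hk
    have h1 := Nat.choose_mul_factorial_mul_factorial (show k ≤ n + 1 by omega)
    have h2 := Nat.choose_mul_factorial_mul_factorial hk
    have h3 : (n + 1 - k).factorial = (n + 1 - k) * (n - k).factorial := by
      have : n + 1 - k = (n - k) + 1 := by omega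
      rw [this, Nat.factorial_succ]
    have hpos : 0 < k.factorial * (n - k).factorial :=
      Nat.mul_pos k.factorial_pos (n - k).factorial_pos
    refine Nat.eq_of_mul_eq_mul_right hpos ?_
    calc (n + 1 - k) * (n + 1).choose k * (k.factorial * (n - k).factorial)
        = (n + 1).choose k * k.factorial * ((n + 1 - k) * (n - k).factorial) := by ring
      _ = (n + 1).choose k * k.factorial * (n + 1 - k).factorial := by rw [← h3]
      _ = (n + 1).factorial := h1
      _ = (n + 1) * n.factorial := Nat.factorial_succ n
      _ = (n + 1) * (n.choose k * k.factorial * (n - k).factorial) := by rw [h2]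
      _ = (n + 1) * n.choose k * (k.factorial * (n - k).factorial) := by ring
  have hderiv : HasDerivAt (Sabel mr (n + 1))
      (∑ k ∈ range (n + 2), ((n + 1).choose k : ℝ) * ((k : ℝ) * mr + 1) ^ (k - 1) *
        (((n + 1 - k : ℕ) : ℝ) * (y - k * mr) ^ (n + 1 - k - 1))) y := by
    unfold Sabel
    refine HasDerivAt.fun_sum fun k _ => ?_
    have h := ((hasDerivAt_id y).sub_const ((k : ℝ) * mr)).pow (n + 1 - k)
    simp only [id_eq, mul_one] at h
    exact h.const_mul _
  have heq : ∑ k ∈ range (n + 2), ((n + 1).choose k : ℝ) * ((k : ℝ) * mr + 1) ^ (k - 1) *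
        (((n + 1 - k : ℕ) : ℝ) * (y - k * mr) ^ (n + 1 - k - 1))
      = ((n : ℝ) + 1) * Sabel mr n y := by
    rw [Finset.sum_range_succ]
    have hlast : ((n + 1 - (n + 1) : ℕ) : ℝ) = 0 := by simp
    rw [hlast]
    simp only [mul_zero, zero_mul, add_zero]
    rw [Sabel, Finset.mul_sum]
    refine Finset.sum_congr rfl fun k hk => ?_
    have hkn : k ≤ n := Nat.lt_succ_iff.mp (Finset.mem_range.mp hk)
    have hcast : ((n + 1).choose k : ℝ) * ((n + 1 - k : ℕ) : ℝ)
        = ((n : ℝ) + 1) * (n.choose k : ℝ) := by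
      have := congrArg (fun z : ℕ => (z : ℝ)) (natlem k hkn)
      push_cast at this
      linarith [this]
    have hexp : n + 1 - k - 1 = n - k := by omega
    rw [hexp]
    calc ((n + 1).choose k : ℝ) * ((k : ℝ) * mr + 1) ^ (k - 1) *
          (((n + 1 - k : ℕ) : ℝ) * (y - k * mr) ^ (n - k))
        = (((n + 1).choose k : ℝ) * ((n + 1 - k : ℕ) : ℝ)) *
            (((k : ℝ) * mr + 1) ^ (k - 1) * (y - k * mr) ^ (n - k)) := by ring
      _ = (((n : ℝ) + 1) * (n.choose k : ℝ)) *
            (((k : ℝ) * mr + 1) ^ (k - 1) * (y - k * mr) ^ (n - k)) := by rw [hcast]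
      _ = ((n : ℝ) + 1) * ((n.choose k : ℝ) * ((k : ℝ) * mr + 1) ^ (k - 1) *
            (y - k * mr) ^ (n - k)) := by ring
  rw [← heq]
  exact hderiv

lemma Sabel_eq (mr : ℝ) : ∀ n : ℕ, ∀ y : ℝ, Sabel mr n y = (1 + y) ^ n := by
  intro n
  induction n with
  | zero => intro y; simp [Sabel]
  | succ n ih =>
      intro y
      have hg : ∀ x : ℝ, HasDerivAt (fun x => Sabel mr (n + 1) x - (1 + x) ^ (n + 1)) 0 x := by
        intro x
        have h1 := Sabel_hasDerivAt mr n x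
        have h2 : HasDerivAt (fun x : ℝ => (1 + x) ^ (n + 1))
            (((n : ℝ) + 1) * (1 + x) ^ n) x := by
          have := ((hasDerivAt_pow (n + 1) (1 + x)).comp x
            ((hasDerivAt_id x).const_add 1))
          simpa [Function.comp_def, mul_comm, Nat.add_sub_cancel] using this
        have := h1.sub h2
        rw [ih x] at this
        simpa [Pi.sub_def] using this
      have hconst := is_const_of_deriv_eq_zero
        (f := fun x => Sabel mr (n + 1) x - (1 + x) ^ (n + 1))
        (fun x => (hg x).differentiableAt) (fun x => (hg x).deriv) y (-1)
      have h0 : Sabel mr (n + 1) (-1) - (1 + (-1 : ℝ)) ^ (n + 1) = 0 := by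
        rw [Sabel_neg_one mr (n + 1) (Nat.succ_ne_zero n)]
        norm_num
      have := hconst.trans h0
      linarith [this]

lemma abel0 (mr : ℝ) (n : ℕ) :
    ∑ k ∈ range (n + 1), (n.choose k : ℝ) * ((k : ℝ) * mr + 1) ^ (k - 1) * (-(k * mr)) ^ (n - k)
      = 1 := by
  have := Sabel_eq mr n 0
  rw [Sabel] at this
  simpa using this

lemma pow_le_exp_mul_fact {x : ℝ} (hx : 0 ≤ x) (k : ℕ) :
    x ^ k ≤ Real.exp x * k.factorial := by
  have h1 : x ^ k / k.factorial ≤ Real.exp x := by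
    calc x ^ k / k.factorial ≤ ∑ i ∈ range (k + 1), x ^ i / i.factorial := by
          exact Finset.single_le_sum (f := fun i => x ^ i / (i.factorial : ℝ)) (fun i _ => by positivity) (Finset.self_mem_range_succ k)
      _ ≤ Real.exp x := Real.sum_le_exp_of_nonneg hx _
  have hf : (0 : ℝ) < k.factorial := by exact_mod_cast k.factorial_pos
  calc x ^ k = x ^ k / k.factorial * k.factorial := by field_simp
    _ ≤ Real.exp x * k.factorial := by
        exact mul_le_mul_of_nonneg_right h1 hf.le

/-- The key bound : `(kM+1)^(k-1) u^k / k! ≤ e q^k` when `M e u ≤ q` and `M ≥ 1`. -/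
lemma term_bound {M q u : ℝ} (hM : 1 ≤ M) (hu : 0 ≤ u) (hq : M * Real.exp 1 * u ≤ q) (k : ℕ) :
    ((k : ℝ) * M + 1) ^ (k - 1) * u ^ k / k.factorial ≤ Real.exp 1 * q ^ k := by
  have hM0 : (0 : ℝ) < M := lt_of_lt_of_le one_pos hM
  have he : (1 : ℝ) ≤ Real.exp 1 := by
    have := Real.add_one_le_exp (1 : ℝ); linarith
  have hq0 : 0 ≤ q := le_trans (by positivity) hq
  rcases Nat.eq_zero_or_pos k with rfl | hk
  · simpa using he
  have hk1 : (1 : ℝ) ≤ (k : ℝ) := by exact_mod_cast hk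
  have hkM : (0 : ℝ) < (k : ℝ) * M := by positivity
  -- (kM+1)^(k-1) ≤ (kM)^(k-1) * e
  have h1 : ((k : ℝ) * M + 1) ^ (k - 1) ≤ ((k : ℝ) * M) ^ (k - 1) * Real.exp 1 := by
    have hle : (k : ℝ) * M + 1 ≤ (k : ℝ) * M * Real.exp (1 / ((k : ℝ) * M)) := by
      have := Real.add_one_le_exp (1 / ((k : ℝ) * M))
      calc (k : ℝ) * M + 1 = ((k : ℝ) * M) * (1 / ((k : ℝ) * M) + 1) := by field_simp; ring
        _ ≤ (k : ℝ) * M * Real.exp (1 / ((k : ℝ) * M)) := by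
            have h' : 1 / ((k : ℝ) * M) + 1 ≤ Real.exp (1 / ((k : ℝ) * M)) := this
            nlinarith [hkM]
    calc ((k : ℝ) * M + 1) ^ (k - 1)
        ≤ ((k : ℝ) * M * Real.exp (1 / ((k : ℝ) * M))) ^ (k - 1) := by
          exact pow_le_pow_left₀ (by positivity) hle _
      _ = ((k : ℝ) * M) ^ (k - 1) * Real.exp (1 / ((k : ℝ) * M)) ^ (k - 1) := mul_pow _ _ _
      _ ≤ ((k : ℝ) * M) ^ (k - 1) * Real.exp 1 := by
          refine mul_le_mul_of_nonneg_left ?_ (by positivity)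
          rw [← Real.exp_nat_mul]
          refine Real.exp_le_exp.mpr ?_
          rw [mul_one_div, div_le_one hkM]
          calc ((k - 1 : ℕ) : ℝ) ≤ (k : ℝ) := by
                exact_mod_cast Nat.cast_le.mpr (Nat.sub_le k 1)
            _ = (k : ℝ) * 1 := (mul_one _).symm
            _ ≤ (k : ℝ) * M := by exact mul_le_mul_of_nonneg_left hM (by positivity)
  have h2 : ((k : ℝ) * M) ^ (k - 1) ≤ M ^ k * (k : ℝ) ^ k := by
    calc ((k : ℝ) * M) ^ (k - 1) = (k : ℝ) ^ (k - 1) * M ^ (k - 1) := mul_pow _ _ _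
      _ ≤ (k : ℝ) ^ k * M ^ k := by
          exact mul_le_mul (pow_le_pow_right₀ hk1 (Nat.sub_le k 1))
            (pow_le_pow_right₀ hM (Nat.sub_le k 1)) (by positivity) (by positivity)
      _ = M ^ k * (k : ℝ) ^ k := mul_comm _ _
  have h3 : ((k : ℝ)) ^ k ≤ Real.exp 1 ^ k * k.factorial := by
    have := pow_le_exp_mul_fact (show (0 : ℝ) ≤ (k : ℝ) by positivity) k
    calc ((k : ℝ)) ^ k ≤ Real.exp (k : ℝ) * k.factorial := this
      _ = Real.exp 1 ^ k * k.factorial := by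
          rw [← Real.exp_nat_mul, mul_one]
  have hfac : (0 : ℝ) < (k.factorial : ℝ) := by exact_mod_cast k.factorial_pos
  rw [div_le_iff₀ hfac]
  calc ((k : ℝ) * M + 1) ^ (k - 1) * u ^ k
      ≤ (((k : ℝ) * M) ^ (k - 1) * Real.exp 1) * u ^ k := by
        exact mul_le_mul_of_nonneg_right h1 (by positivity)
    _ ≤ ((M ^ k * (k : ℝ) ^ k) * Real.exp 1) * u ^ k := by
        have := mul_le_mul_of_nonneg_right h2 (Real.exp_pos 1).le
        exact mul_le_mul_of_nonneg_right this (by positivity)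
    _ ≤ ((M ^ k * (Real.exp 1 ^ k * k.factorial)) * Real.exp 1) * u ^ k := by
        have := mul_le_mul_of_nonneg_left h3 (show (0:ℝ) ≤ M ^ k by positivity)
        have := mul_le_mul_of_nonneg_right this (Real.exp_pos 1).le
        exact mul_le_mul_of_nonneg_right this (by positivity)
    _ = Real.exp 1 * ((M * Real.exp 1 * u) ^ k) * k.factorial := by
        rw [mul_pow, mul_pow]
        ring
    _ ≤ Real.exp 1 * q ^ k * k.factorial := by
        have := pow_le_pow_left₀ (show (0:ℝ) ≤ M * Real.exp 1 * u by positivity) hq k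
        have := mul_le_mul_of_nonneg_left this (Real.exp_pos 1).le
        exact mul_le_mul_of_nonneg_right this hfac.le

noncomputable def Gterm (M : ℝ) (k : ℕ) (z : ℂ) : ℂ :=
  ((((k : ℝ) * M + 1 : ℝ)) : ℂ) ^ (k - 1) * z ^ k * Complex.exp (-((M * k : ℝ) : ℂ) * z) /
    ((k.factorial : ℝ) : ℂ)

noncomputable def Gsum (M : ℝ) (z : ℂ) : ℂ := ∑' k : ℕ, Gterm M k z

lemma Gterm_norm {M : ℝ} (hM : 1 ≤ M) (k : ℕ) (z : ℂ) :
    ‖Gterm M k z‖ = ((k : ℝ) * M + 1) ^ (k - 1) *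
      (‖z‖ * Real.exp (-(M * z.re))) ^ k / k.factorial := by
  have h1 : (0 : ℝ) ≤ (k : ℝ) * M + 1 := by positivity
  have hre : (-((M * k : ℝ) : ℂ) * z).re = -(M * k) * z.re := by
    rw [← Complex.ofReal_neg, Complex.re_ofReal_mul]
  rw [Gterm, norm_div, norm_mul, norm_mul, norm_pow, norm_pow]
  rw [Complex.norm_real, Complex.norm_real, Complex.norm_exp, hre, Real.norm_eq_abs,
    Real.norm_eq_abs]
  rw [abs_of_nonneg h1, abs_of_nonneg (by positivity : (0:ℝ) ≤ (k.factorial : ℝ))]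
  rw [mul_pow, ← Real.exp_nat_mul]
  ring_nf

def Uset (M : ℝ) : Set ℂ :=
  {z | z.re * M < 1 ∧ M * Real.exp 1 * (‖z‖ * Real.exp (-(M * z.re))) < 1}

lemma Uset_isOpen (M : ℝ) : IsOpen (Uset M) := by
  have h1 : IsOpen {z : ℂ | z.re * M < 1} :=
    isOpen_lt (by fun_prop) continuous_const
  have h2 : IsOpen {z : ℂ | M * Real.exp 1 * (‖z‖ * Real.exp (-(M * z.re))) < 1} := by
    refine isOpen_lt ?_ continuous_const
    exact (continuous_const.mul (continuous_norm.mul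
      (Real.continuous_exp.comp ((continuous_const.mul Complex.continuous_re).neg))))
  exact h1.inter h2

lemma zero_mem_Uset (M : ℝ) : (0 : ℂ) ∈ Uset M := by
  constructor <;> simp [Uset]

lemma Uset_star {M : ℝ} (hM : 1 ≤ M) {z : ℂ} (hz : z ∈ Uset M) {a : ℝ}
    (h0 : 0 ≤ a) (h1 : a ≤ 1) : a • z ∈ Uset M := by
  obtain ⟨hz1, hz2⟩ := hz
  have hM0 : (0 : ℝ) < M := lt_of_lt_of_le one_pos hM
  have hre : (a • z).re = a * z.re := by
    rw [Complex.real_smul, Complex.re_ofReal_mul]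
  have habs : ‖a • z‖ = a * ‖z‖ := by
    rw [Complex.real_smul, norm_mul, Complex.norm_real, Real.norm_eq_abs, abs_of_nonneg h0]
  have key : a * Real.exp (-(M * (a * z.re))) ≤ Real.exp (-(M * z.re)) := by
    have hsplit : Real.exp (-(M * (a * z.re)))
        = Real.exp (-(M * z.re)) * Real.exp (M * (1 - a) * z.re) := by
      rw [← Real.exp_add]; ring_nf
    rw [hsplit]
    have hkey2 : a * Real.exp (M * (1 - a) * z.re) ≤ 1 := by
      rcases le_or_gt z.re 0 with hzre | hzre
      · have hexp : Real.exp (M * (1 - a) * z.re) ≤ 1 := by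
          rw [Real.exp_le_one_iff]
          have : 0 ≤ M * (1 - a) := by nlinarith
          nlinarith
        nlinarith [Real.exp_pos (M * (1 - a) * z.re)]
      · have hMz : M * z.re < 1 := by nlinarith
        have hle : M * (1 - a) * z.re ≤ 1 - a := by nlinarith
        have hexp : Real.exp (M * (1 - a) * z.re) ≤ Real.exp (1 - a) :=
          Real.exp_le_exp.mpr hle
        have haexp : a * Real.exp (1 - a) ≤ 1 := by
          have h2 := Real.add_one_le_exp (a - 1)
          have h3 : a ≤ Real.exp (a - 1) := by linarith
          have h4 := mul_le_mul_of_nonneg_right h3 (Real.exp_pos (1 - a)).le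
          rw [← Real.exp_add] at h4
          simpa using h4
        calc a * Real.exp (M * (1 - a) * z.re) ≤ a * Real.exp (1 - a) :=
              mul_le_mul_of_nonneg_left hexp h0
          _ ≤ 1 := haexp
    calc a * (Real.exp (-(M * z.re)) * Real.exp (M * (1 - a) * z.re))
        = Real.exp (-(M * z.re)) * (a * Real.exp (M * (1 - a) * z.re)) := by ring
      _ ≤ Real.exp (-(M * z.re)) * 1 := by
          exact mul_le_mul_of_nonneg_left hkey2 (Real.exp_pos _).le
      _ = Real.exp (-(M * z.re)) := mul_one _
  constructor
  · show (a • z).re * M < 1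
    rw [hre]
    rcases le_or_gt z.re 0 with hzre | hzre
    · have : a * z.re * M ≤ 0 := by
        have : a * z.re ≤ 0 := mul_nonpos_of_nonneg_of_nonpos h0 hzre
        exact mul_nonpos_of_nonpos_of_nonneg this hM0.le
      linarith
    · have h6 : a * z.re ≤ z.re := by nlinarith
      have := mul_le_mul_of_nonneg_right h6 hM0.le
      linarith
  · show M * Real.exp 1 * (‖a • z‖ * Real.exp (-(M * (a • z).re))) < 1
    rw [hre, habs]
    have h5 : a * ‖z‖ * Real.exp (-(M * (a * z.re)))
        ≤ ‖z‖ * Real.exp (-(M * z.re)) := by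
      have := mul_le_mul_of_nonneg_left key (norm_nonneg z)
      calc a * ‖z‖ * Real.exp (-(M * (a * z.re)))
          = ‖z‖ * (a * Real.exp (-(M * (a * z.re)))) := by ring
        _ ≤ ‖z‖ * Real.exp (-(M * z.re)) := this
    calc M * Real.exp 1 * (a * ‖z‖ * Real.exp (-(M * (a * z.re))))
        ≤ M * Real.exp 1 * (‖z‖ * Real.exp (-(M * z.re))) := by
          exact mul_le_mul_of_nonneg_left h5 (by positivity)
      _ < 1 := hz2

lemma Uset_preconnected {M : ℝ} (hM : 1 ≤ M) : IsPreconnected (Uset M) := by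
  refine isPreconnected_of_forall (0 : ℂ) fun y hy => ?_
  refine ⟨segment ℝ 0 y, ?_, left_mem_segment ℝ 0 y, right_mem_segment ℝ 0 y,
    (convex_segment (0 : ℂ) y).isPreconnected⟩
  intro x hx
  rw [segment_eq_image] at hx
  obtain ⟨a, ⟨ha0, ha1⟩, rfl⟩ := hx
  simpa using Uset_star hM hy ha0 ha1

-- real exp as tsum
lemma realexp_tsum (x : ℝ) : Real.exp x = ∑' n : ℕ, x ^ n / n.factorial := by
  rw [Real.exp_eq_exp_ℝ, NormedSpace.exp_eq_tsum_div]

lemma cexp_tsum (w : ℂ) : Complex.exp w = ∑' n : ℕ, w ^ n / ((n.factorial : ℝ) : ℂ) := by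
  rw [Complex.exp_eq_exp_ℂ, NormedSpace.exp_eq_tsum_div]
  norm_num

lemma Gterm_differentiable (M : ℝ) (k : ℕ) : Differentiable ℂ (Gterm M k) := by
  unfold Gterm
  apply Differentiable.div_const
  refine ((differentiable_const _).mul (differentiable_pow k)).mul ?_
  exact (differentiable_id.const_mul _).cexp

lemma Gsum_differentiableOn {M : ℝ} (hM : 1 ≤ M) :
    DifferentiableOn ℂ (Gsum M) (Uset M) := by
  intro z hz
  set v := M * Real.exp 1 * (‖z‖ * Real.exp (-(M * z.re))) with hv
  have hv0 : 0 ≤ v := by positivity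
  have hv1 : v < 1 := hz.2
  set q := (1 + v) / 2 with hqdef
  have hq0 : 0 ≤ q := by positivity
  have hq1 : q < 1 := by rw [hqdef]; linarith
  have hvq : v < q := by rw [hqdef]; linarith
  set V := {w : ℂ | M * Real.exp 1 * (‖w‖ * Real.exp (-(M * w.re))) < q} with hVdef
  have hVopen : IsOpen V := by
    refine isOpen_lt ?_ continuous_const
    exact (continuous_const.mul (continuous_norm.mul
      (Real.continuous_exp.comp ((continuous_const.mul Complex.continuous_re).neg))))
  have hzV : z ∈ V := hvq
  have hdiff : DifferentiableOn ℂ (Gsum M) V := by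
    refine Complex.differentiableOn_tsum_of_summable_norm
      (u := fun k => Real.exp 1 * q ^ k)
      ((summable_geometric_of_lt_one hq0 hq1).mul_left _)
      (fun k => (Gterm_differentiable M k).differentiableOn) hVopen ?_
    intro k w hw
    rw [Gterm_norm hM k w]
    exact term_bound hM (by positivity) (le_of_lt hw) k
  exact ((hdiff.differentiableAt (hVopen.mem_nhds hzV)).differentiableWithinAt)

lemma Gsum_analytic {M : ℝ} (hM : 1 ≤ M) : AnalyticOnNhd ℂ (Gsum M) (Uset M) :=
  (Gsum_differentiableOn hM).analyticOnNhd (Uset_isOpen M)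

lemma tsum_prod_eq_tsum_antidiagonal {F : ℕ × ℕ → ℂ} (hF : Summable F) :
    ∑' p : ℕ × ℕ, F p = ∑' n : ℕ, ∑ kl ∈ Finset.HasAntidiagonal.antidiagonal n, F kl := by
  conv_rhs => congr; ext; rw [← Finset.sum_finset_coe, ← tsum_fintype (L := SummationFilter.unconditional _)]
  rw [← Finset.HasAntidiagonal.sigmaAntidiagonalEquivProd.tsum_eq F]
  exact Summable.tsum_sigma' (fun n => (hasSum_fintype _).summable)
    (Finset.HasAntidiagonal.sigmaAntidiagonalEquivProd.summable_iff.mpr hF)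

lemma Gsum_eq_exp_small {M : ℝ} (hM : 1 ≤ M) {z : ℂ}
    (hz : ‖z‖ ≤ 1 / (4 * M * Real.exp 1)) : Gsum M z = Complex.exp z := by
  have hM0 : (0 : ℝ) < M := lt_of_lt_of_le one_pos hM
  have he1 : (1 : ℝ) ≤ Real.exp 1 := by have := Real.add_one_le_exp (1 : ℝ); linarith
  have he3 : Real.exp 1 ≤ 3 := by
    have := Real.exp_one_lt_d9; linarith
  set r := ‖z‖ with hrdef
  have hr0 : 0 ≤ r := norm_nonneg z
  have hMr : M * r ≤ 1 := by
    have h4 : (0:ℝ) < 4 * M * Real.exp 1 := by positivity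
    have := mul_le_mul_of_nonneg_left hz hM0.le
    rw [mul_one_div] at this
    have h5 : M / (4 * M * Real.exp 1) ≤ 1 := by
      rw [div_le_one h4]; nlinarith
    linarith
  have hrow : M * Real.exp 1 * (r * Real.exp (M * r)) ≤ 3 / 4 := by
    have hMer : M * Real.exp 1 * r ≤ 1 / 4 := by
      have h4 : (0:ℝ) < 4 * M * Real.exp 1 := by positivity
      have := mul_le_mul_of_nonneg_left hz (by positivity : (0:ℝ) ≤ M * Real.exp 1)
      rw [mul_one_div] at this
      have h5 : M * Real.exp 1 / (4 * M * Real.exp 1) = 1 / 4 := by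
        field_simp
      linarith [this.trans_eq h5]
    have hexp : Real.exp (M * r) ≤ 3 := by
      calc Real.exp (M * r) ≤ Real.exp 1 := Real.exp_le_exp.mpr hMr
        _ ≤ 3 := he3
    calc M * Real.exp 1 * (r * Real.exp (M * r))
        = (M * Real.exp 1 * r) * Real.exp (M * r) := by ring
      _ ≤ (1 / 4) * 3 := by
          exact mul_le_mul hMer hexp (Real.exp_pos _).le (by norm_num)
      _ ≤ 3 / 4 := by norm_num
  -- the double-indexed family
  set F : ℕ × ℕ → ℂ := fun p =>
    ((((p.1 : ℝ) * M + 1 : ℝ)) : ℂ) ^ (p.1 - 1) * z ^ p.1 / ((p.1.factorial : ℝ) : ℂ) *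
      ((-((M * p.1 : ℝ)) : ℂ) * z) ^ p.2 / ((p.2.factorial : ℝ) : ℂ) with hFdef
  have hnormF : ∀ p : ℕ × ℕ, ‖F p‖ = ((p.1 : ℝ) * M + 1) ^ (p.1 - 1) * r ^ p.1 / p.1.factorial *
      ((M * p.1 * r) ^ p.2 / p.2.factorial) := by
    rintro ⟨k, j⟩
    have h1 : (0 : ℝ) ≤ (k : ℝ) * M + 1 := by positivity
    simp only [hFdef, norm_div, norm_mul, norm_pow, Complex.norm_real, Real.norm_eq_abs,
      norm_neg]
    rw [abs_of_nonneg h1, abs_of_nonneg hM0.le, Nat.abs_cast k,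
      abs_of_nonneg (by positivity : (0:ℝ) ≤ (k.factorial : ℝ)),
      abs_of_nonneg (by positivity : (0:ℝ) ≤ (j.factorial : ℝ))]
    rw [mul_pow]
    rw [← hrdef]
    ring_nf
  have hFsum : Summable F := by
    apply Summable.of_norm
    have heq : (fun p => ‖F p‖) = fun p : ℕ × ℕ =>
        ((p.1 : ℝ) * M + 1) ^ (p.1 - 1) * r ^ p.1 / p.1.factorial *
        ((M * p.1 * r) ^ p.2 / p.2.factorial) := funext hnormF
    rw [heq]
    refine (summable_prod_of_nonneg ?_).mpr ⟨fun k => ?_, ?_⟩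
    · intro p; positivity
    · refine Summable.congr ((Real.summable_pow_div_factorial (M * (k:ℝ) * r)).mul_left
        (((k : ℝ) * M + 1) ^ (k - 1) * r ^ k / k.factorial)) fun j => ?_
      simp
    · -- summability of row sums
      have hrowsum : ∀ k : ℕ, ∑' j : ℕ, ((k : ℝ) * M + 1) ^ (k - 1) * r ^ k / k.factorial *
          ((M * k * r) ^ j / j.factorial)
          = ((k : ℝ) * M + 1) ^ (k - 1) * (r * Real.exp (M * r)) ^ k / k.factorial := by
        intro k
        rw [tsum_mul_left, ← realexp_tsum]
        rw [show M * (k:ℝ) * r = (k:ℝ) * (M * r) by ring, Real.exp_nat_mul]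
        rw [mul_pow]
        ring
      simp only [hrowsum]
      refine Summable.of_nonneg_of_le (fun k => by positivity) (fun k => ?_)
        (((summable_geometric_of_lt_one (by norm_num) (by norm_num : (3:ℝ)/4 < 1))).mul_left
          (Real.exp 1))
      exact term_bound hM (by positivity) hrow k
  -- step 1 : Gsum = iterated sum
  have step1 : Gsum M z = ∑' k : ℕ, ∑' j : ℕ, F (k, j) := by
    refine tsum_congr fun k => ?_
    have hexp : Complex.exp (-((M * k : ℝ) : ℂ) * z)
        = ∑' j : ℕ, ((-((M * k : ℝ)) : ℂ) * z) ^ j / ((j.factorial : ℝ) : ℂ) :=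
      cexp_tsum _
    rw [Gterm]
    calc ((((k : ℝ) * M + 1 : ℝ)) : ℂ) ^ (k - 1) * z ^ k *
          Complex.exp (-((M * k : ℝ) : ℂ) * z) / ((k.factorial : ℝ) : ℂ)
        = ((((k : ℝ) * M + 1 : ℝ)) : ℂ) ^ (k - 1) * z ^ k / ((k.factorial : ℝ) : ℂ) *
            Complex.exp (-((M * k : ℝ) : ℂ) * z) := by ring
      _ = ∑' j : ℕ, F (k, j) := by
          rw [hexp, ← tsum_mul_left]
          refine tsum_congr fun j => ?_
          simp only [hFdef]
          ring
  -- step 2 : iterated sum = product sum = antidiagonal sum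
  have step2 : ∑' k : ℕ, ∑' j : ℕ, F (k, j) = ∑' p : ℕ × ℕ, F p :=
    (Summable.tsum_prod' hFsum fun k => hFsum.prod_factor k).symm
  have step3 : ∑' p : ℕ × ℕ, F p = ∑' n : ℕ, ∑ kl ∈ Finset.HasAntidiagonal.antidiagonal n, F kl :=
    tsum_prod_eq_tsum_antidiagonal hFsum
  -- step 4 : each antidiagonal sum equals z^n/n!
  have step4 : ∀ n : ℕ, ∑ kl ∈ Finset.HasAntidiagonal.antidiagonal n, F kl = z ^ n / ((n.factorial : ℝ) : ℂ) := by
    intro n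
    rw [Finset.Nat.sum_antidiagonal_eq_sum_range_succ_mk]
    have habelC : ∑ k ∈ range (n + 1), ((n.choose k : ℝ) : ℂ) *
        ((((k : ℝ) * M + 1 : ℝ)) : ℂ) ^ (k - 1) * ((-(((k : ℝ) * M)) : ℝ) : ℂ) ^ (n - k)
          = 1 := by
      have := congrArg (fun x : ℝ => (x : ℂ)) (abel0 M n)
      push_cast at this ⊢
      convert this using 2 with k hk
    have hterm : ∀ k ∈ range (n + 1), F (k, n - k)
        = z ^ n / ((n.factorial : ℝ) : ℂ) * (((n.choose k : ℝ) : ℂ) *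
            ((((k : ℝ) * M + 1 : ℝ)) : ℂ) ^ (k - 1) * ((-(((k : ℝ) * M)) : ℝ) : ℂ) ^ (n - k)) := by
      intro k hk
      have hkn : k ≤ n := Nat.lt_succ_iff.mp (Finset.mem_range.mp hk)
      have hzpow : z ^ k * z ^ (n - k) = z ^ n := by
        rw [← pow_add]; congr 1; omega
      have hfact : ((n.choose k : ℝ) : ℂ) * ((k.factorial : ℝ) : ℂ) * (((n - k).factorial : ℝ) : ℂ)
          = ((n.factorial : ℝ) : ℂ) := by
        have := Nat.choose_mul_factorial_mul_factorial hkn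
        exact_mod_cast congrArg (fun x : ℕ => (x : ℂ)) this
      have hk0 : ((k.factorial : ℝ) : ℂ) ≠ 0 := by
        exact_mod_cast Nat.cast_ne_zero.mpr k.factorial_ne_zero
      have hnk0 : (((n - k).factorial : ℝ) : ℂ) ≠ 0 := by
        exact_mod_cast Nat.cast_ne_zero.mpr (n - k).factorial_ne_zero
      have hn0 : ((n.factorial : ℝ) : ℂ) ≠ 0 := by
        exact_mod_cast Nat.cast_ne_zero.mpr n.factorial_ne_zero
      have hC0 : ((n.choose k : ℝ) : ℂ) ≠ 0 := by
        exact_mod_cast Nat.cast_ne_zero.mpr (Nat.choose_pos hkn).ne'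
      have hfrac : (1 : ℂ) / (((k.factorial : ℝ) : ℂ) * (((n - k).factorial : ℝ) : ℂ))
          = ((n.choose k : ℝ) : ℂ) / ((n.factorial : ℝ) : ℂ) := by
        rw [div_eq_div_iff (mul_ne_zero hk0 hnk0) hn0]
        linear_combination -hfact
      have hneg : (-((M * k : ℝ)) : ℂ) = ((-(((k : ℝ) * M)) : ℝ) : ℂ) := by
        push_cast; ring
      show ((((k : ℝ) * M + 1 : ℝ)) : ℂ) ^ (k - 1) * z ^ k / ((k.factorial : ℝ) : ℂ) *
          ((-((M * k : ℝ)) : ℂ) * z) ^ (n - k) / (((n - k).factorial : ℝ) : ℂ) = _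
      rw [mul_pow, hneg]
      calc ((((k : ℝ) * M + 1 : ℝ)) : ℂ) ^ (k - 1) * z ^ k / ((k.factorial : ℝ) : ℂ) *
            (((-(((k : ℝ) * M)) : ℝ) : ℂ) ^ (n - k) * z ^ (n - k)) / (((n - k).factorial : ℝ) : ℂ)
          = ((((k : ℝ) * M + 1 : ℝ)) : ℂ) ^ (k - 1) * ((-(((k : ℝ) * M)) : ℝ) : ℂ) ^ (n - k) *
              (z ^ k * z ^ (n - k)) *
              ((1 : ℂ) / (((k.factorial : ℝ) : ℂ) * (((n - k).factorial : ℝ) : ℂ))) := by ring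
        _ = ((((k : ℝ) * M + 1 : ℝ)) : ℂ) ^ (k - 1) * ((-(((k : ℝ) * M)) : ℝ) : ℂ) ^ (n - k) *
              z ^ n * (((n.choose k : ℝ) : ℂ) / ((n.factorial : ℝ) : ℂ)) := by
            rw [hzpow, hfrac]
        _ = z ^ n / ((n.factorial : ℝ) : ℂ) * (((n.choose k : ℝ) : ℂ) *
              ((((k : ℝ) * M + 1 : ℝ)) : ℂ) ^ (k - 1) *
              ((-(((k : ℝ) * M)) : ℝ) : ℂ) ^ (n - k)) := by ring
    rw [Finset.sum_congr rfl hterm, ← Finset.mul_sum, habelC, mul_one]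
  -- step 5 : conclude
  rw [step1, step2, step3]
  rw [tsum_congr step4, cexp_tsum]

lemma Gsum_eq_exp_on_U {M : ℝ} (hM : 1 ≤ M) : Set.EqOn (Gsum M) Complex.exp (Uset M) := by
  have hM0 : (0 : ℝ) < M := lt_of_lt_of_le one_pos hM
  refine (Gsum_analytic hM).eqOn_of_preconnected_of_eventuallyEq
    (analyticOnNhd_cexp.mono (Set.subset_univ _)) (Uset_preconnected hM)
    (zero_mem_Uset M) ?_
  have hball : Metric.ball (0 : ℂ) (1 / (4 * M * Real.exp 1)) ∈ nhds (0 : ℂ) :=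
    Metric.ball_mem_nhds _ (by positivity)
  filter_upwards [hball] with z hz
  refine Gsum_eq_exp_small hM ?_
  rw [Metric.mem_ball, Complex.dist_eq, sub_zero] at hz
  exact hz.le

-- the map s ↦ s e^{-s}
noncomputable def hfun (s : ℝ) : ℝ := s * Real.exp (-s)

lemma hfun_hasDerivAt (s : ℝ) : HasDerivAt hfun ((1 - s) * Real.exp (-s)) s := by
  have h1 : HasDerivAt (fun s : ℝ => Real.exp (-s)) (-Real.exp (-s)) s := by
    simpa using (hasDerivAt_neg s).exp
  have h2 := (hasDerivAt_id s).mul h1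
  have h3 : (1 - s) * Real.exp (-s) = 1 * Real.exp (-s) + id s * -Real.exp (-s) := by
    simp only [id]; ring
  rw [h3]
  exact h2

lemma hfun_strictMonoOn : StrictMonoOn hfun (Set.Icc 0 1) := by
  refine strictMonoOn_of_deriv_pos (convex_Icc 0 1)
    (fun s _ => (hfun_hasDerivAt s).continuousAt.continuousWithinAt) ?_
  intro s hs
  rw [interior_Icc] at hs
  rw [(hfun_hasDerivAt s).deriv]
  have := Real.exp_pos (-s)
  nlinarith [hs.1, hs.2]

lemma hfun_strictAntiOn : StrictAntiOn hfun (Set.Ici 1) := by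
  refine strictAntiOn_of_deriv_neg (convex_Ici 1)
    (fun s _ => (hfun_hasDerivAt s).continuousAt.continuousWithinAt) ?_
  intro s hs
  rw [interior_Ici] at hs
  rw [(hfun_hasDerivAt s).deriv]
  have := Real.exp_pos (-s)
  have hs1 : 1 < s := hs
  nlinarith

/-- `f m c = ∑_{k=0}^∞ (km+1)^{k-1} c^k e^{-c(km+1)/m} / (m^k k!)`, where the factor
`(km+1)^{k-1}` for `k = 0` is interpreted as `1` (here via `ℕ`-subtraction in the exponent,
which gives `(0·m+1)^0 = 1`). -/
noncomputable def f (m c : ℝ) : ℝ :=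
  ∑' k : ℕ, ((k : ℝ) * m + 1) ^ (k - 1) * c ^ k *
    Real.exp (-c * ((k : ℝ) * m + 1) / m) / (m ^ k * (Nat.factorial k : ℝ))

theorem f_supercritical (m : ℕ) (hm : 0 < m) (c : ℝ) (hc : 1 < c) :
    f (m : ℝ) c ∈ Set.Ioo (0 : ℝ) 1 ∧
      f (m : ℝ) c = Real.exp (-c * (1 - f (m : ℝ) c ^ m) / m) ∧
      ∀ y ∈ Set.Ioo (0 : ℝ) 1, y = Real.exp (-c * (1 - y ^ m) / m) → y = f (m : ℝ) c := by
  set M : ℝ := (m : ℝ) with hMdef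
  have hM : 1 ≤ M := Nat.one_le_cast.mpr hm
  have hM0 : (0 : ℝ) < M := lt_of_lt_of_le one_pos hM
  have hc0 : (0 : ℝ) < c := lt_trans one_pos hc
  -- dual parameter d ∈ (0,1)
  have hcont : ContinuousOn hfun (Set.Icc 0 1) :=
    (continuous_id.mul (Real.continuous_exp.comp continuous_neg)).continuousOn
  have hfc_lt : hfun c < hfun 1 :=
    hfun_strictAntiOn (Set.self_mem_Ici) (Set.mem_Ici.mpr hc.le) hc
  have hfc_pos : 0 < hfun c := by
    have := Real.exp_pos (-c); unfold hfun; positivity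
  have hmem : hfun c ∈ Set.Ioo (hfun 0) (hfun 1) := by
    constructor
    · simpa [hfun] using hfc_pos
    · exact hfc_lt
  obtain ⟨d, hd, hfd⟩ := intermediate_value_Ioo (by norm_num : (0:ℝ) ≤ 1) hcont hmem
  set th := d / M with hthdef
  have hth0 : 0 < th := div_pos hd.1 hM0
  have hMth : M * th = d := by rw [hthdef]; field_simp
  have hdlt : hfun d < hfun 1 :=
    hfun_strictMonoOn (Set.mem_Icc.mpr ⟨hd.1.le, hd.2.le⟩)
      (Set.mem_Icc.mpr ⟨zero_le_one, le_refl 1⟩) hd.2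
  -- th ∈ U
  have hth_mem : ((th : ℝ) : ℂ) ∈ Uset M := by
    constructor
    · show ((th : ℝ) : ℂ).re * M < 1
      rw [Complex.ofReal_re]
      calc th * M = d := by rw [mul_comm]; exact hMth
        _ < 1 := hd.2
    · show M * Real.exp 1 * (‖((th : ℝ) : ℂ)‖ *
          Real.exp (-(M * ((th : ℝ) : ℂ).re))) < 1
      rw [Complex.ofReal_re, Complex.norm_real, Real.norm_eq_abs, abs_of_nonneg hth0.le, hMth]
      have h1 : M * Real.exp 1 * (th * Real.exp (-d)) = Real.exp 1 * hfun d := by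
        unfold hfun; rw [← hMth]; ring
      rw [h1]
      have h2 : Real.exp 1 * hfun d < Real.exp 1 * hfun 1 :=
        mul_lt_mul_of_pos_left hdlt (Real.exp_pos 1)
      have h3 : Real.exp 1 * hfun 1 = 1 := by
        unfold hfun; rw [one_mul, ← Real.exp_add]; norm_num
      linarith
  -- transfer the complex identity to the real series
  have hGth : Gsum M ((th : ℝ) : ℂ) = Complex.exp ((th : ℝ) : ℂ) :=
    Gsum_eq_exp_on_U hM hth_mem
  set x := th * Real.exp (-d) with hxdef
  set a : ℕ → ℝ := fun k => ((k : ℝ) * M + 1) ^ (k - 1) * x ^ k / k.factorial with hadef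
  have hreal : ∀ k : ℕ, ((k : ℝ) * M + 1) ^ (k - 1) * th ^ k *
      Real.exp (-(M * k) * th) / k.factorial = a k := by
    intro k
    have h4 : -(M * (k : ℝ)) * th = (k : ℝ) * (-(M * th)) := by ring
    rw [h4, Real.exp_nat_mul, hMth]
    simp only [hadef, hxdef, mul_pow]
    ring
  have hGterm : ∀ k : ℕ, Gterm M k ((th : ℝ) : ℂ) = ((a k : ℝ) : ℂ) := by
    intro k
    rw [Gterm, ← hreal k]
    push_cast
    ring
  have hsum : ∑' k : ℕ, a k = Real.exp th := by
    have h5 : ((∑' k : ℕ, a k : ℝ) : ℂ) = ((Real.exp th : ℝ) : ℂ) := by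
      rw [Complex.ofReal_tsum]
      calc ∑' k : ℕ, ((a k : ℝ) : ℂ) = ∑' k : ℕ, Gterm M k ((th : ℝ) : ℂ) :=
            tsum_congr fun k => (hGterm k).symm
        _ = Gsum M ((th : ℝ) : ℂ) := rfl
        _ = Complex.exp ((th : ℝ) : ℂ) := hGth
        _ = ((Real.exp th : ℝ) : ℂ) := (Complex.ofReal_exp th).symm
    exact_mod_cast h5
  -- x equals (c/M) e^{-c}
  have hxc : c / M * Real.exp (-c) = x := by
    have : th * Real.exp (-d) = (1 / M) * hfun d := by
      unfold hfun; rw [hthdef]; ring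
    rw [hxdef, this, hfd]
    unfold hfun; ring
  -- value of f
  have hfval : f M c = Real.exp ((d - c) / M) := by
    have hb : ∀ k : ℕ, ((k : ℝ) * M + 1) ^ (k - 1) * c ^ k *
        Real.exp (-c * ((k : ℝ) * M + 1) / M) / (M ^ k * (k.factorial : ℝ))
          = Real.exp (-(c / M)) * a k := by
      intro k
      have h6 : -c * ((k : ℝ) * M + 1) / M = (k : ℝ) * (-c) + -(c / M) := by
        field_simp; ring
      rw [h6, Real.exp_add, Real.exp_nat_mul]
      simp only [hadef, ← hxc, div_pow, mul_pow]
      have hMk : (M : ℝ) ^ k ≠ 0 := pow_ne_zero k hM0.ne'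
      have hfk : ((k.factorial : ℝ)) ≠ 0 := Nat.cast_ne_zero.mpr k.factorial_ne_zero
      field_simp
    have : f M c = ∑' k : ℕ, Real.exp (-(c / M)) * a k := by
      rw [f]; exact tsum_congr hb
    rw [this, tsum_mul_left, hsum, ← Real.exp_add]
    congr 1
    rw [hthdef]
    field_simp
    ring
  -- basic consequences
  have hdc : d < c := lt_trans hd.2 hc
  have hflt1 : f M c < 1 := by
    rw [hfval]
    apply Real.exp_lt_one_iff.mpr
    apply div_neg_of_neg_of_pos (by linarith) hM0
  have hfpos : 0 < f M c := by rw [hfval]; exact Real.exp_pos _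
  -- f^m = exp (d - c)
  have hfm : f M c ^ m = Real.exp (d - c) := by
    rw [hfval, ← Real.exp_nat_mul]
    congr 1
    field_simp
    rw [hMdef]; ring
  -- c * exp (d - c) = d
  have hcd : c * Real.exp (d - c) = d := by
    have h7 : hfun d = hfun c := hfd
    unfold hfun at h7
    have h8 : Real.exp (d - c) = Real.exp d * Real.exp (-c) := by
      rw [sub_eq_add_neg, Real.exp_add]
    have h9 : Real.exp d * Real.exp (-d) = 1 := by
      rw [← Real.exp_add]; simp
    calc c * Real.exp (d - c) = Real.exp d * (c * Real.exp (-c)) := by rw [h8]; ring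
      _ = Real.exp d * (d * Real.exp (-d)) := by rw [← h7]
      _ = d * (Real.exp d * Real.exp (-d)) := by ring
      _ = d := by rw [h9, mul_one]
  have hfix : f M c = Real.exp (-c * (1 - f M c ^ m) / M) := by
    rw [hfm, hfval]
    congr 1
    have : -c * (1 - Real.exp (d - c)) = c * Real.exp (d - c) - c := by ring
    rw [this, hcd]
  refine ⟨⟨hfpos, hflt1⟩, hfix, ?_⟩
  -- uniqueness
  rintro y ⟨hy0, hy1⟩ hyeq
  set w := c * y ^ m with hwdef
  have hym_pos : 0 < y ^ m := pow_pos hy0 m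
  have hym_lt1 : y ^ m < 1 := pow_lt_one₀ hy0.le hy1 hm.ne'
  have hw0 : 0 < w := by positivity
  have hwc : w < c := by
    calc w = c * y ^ m := rfl
      _ < c * 1 := by exact mul_lt_mul_of_pos_left hym_lt1 hc0
      _ = c := mul_one c
  have hym : y ^ m = Real.exp (w - c) := by
    have hlog : y ^ m = Real.exp (-c * (1 - y ^ m) / M) ^ m := by
      conv_lhs => rw [hyeq]
    rw [← Real.exp_nat_mul] at hlog
    have h11 : (m : ℝ) * (-c * (1 - y ^ m) / M) = w - c := by
      rw [hwdef]
      have hMm : (m : ℝ) = M := rfl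
      rw [hMm]
      field_simp
      ring
    rw [h11] at hlog
    exact hlog
  have hwfun : hfun w = hfun c := by
    unfold hfun
    calc w * Real.exp (-w) = c * y ^ m * Real.exp (-w) := rfl
      _ = c * Real.exp (w - c) * Real.exp (-w) := by rw [hym]
      _ = c * Real.exp (w - c + -w) := by rw [Real.exp_add]; ring
      _ = c * Real.exp (-c) := by rw [show w - c + -w = -c by ring]
  have hw1 : w < 1 := by
    by_contra hw1
    push_neg at hw1
    have := hfun_strictAntiOn (Set.mem_Ici.mpr hw1)
      (Set.mem_Ici.mpr (le_trans hw1 hwc.le)) hwc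
    rw [hwfun] at this
    exact lt_irrefl _ this
  have hwd : w = d := by
    have hinj := hfun_strictMonoOn.injOn
    refine hinj (Set.mem_Icc.mpr ⟨hw0.le, hw1.le⟩) (Set.mem_Icc.mpr ⟨hd.1.le, hd.2.le⟩) ?_
    rw [hwfun, hfd]
  rw [hyeq, hfval]
  congr 1
  have h10 : -c * (1 - y ^ m) = w - c := by rw [hwdef]; ring
  rw [h10, hwd]
end

section
/- For every positive integer m and every real number x with 0 ≤ x ≤ 1/e, g(m,x)^m = g(1,x), i.e., (∑_{k=0}^∞ (km+1)^{k-1} x^k/(m^k k!))^m = ∑_{k=0}^∞ (k+1)^{k-1} x^k / k!. -/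
open Finset

/-- Abel polynomial value `ab k c = c (c+k)^(k-1)`, with `ab 0 c = 1`. -/
noncomputable def ab (k : ℕ) (c : ℝ) : ℝ :=
  if k = 0 then 1 else c * (c + k) ^ (k - 1)

@[simp] lemma ab_zero (c : ℝ) : ab 0 c = 1 := rfl

lemma ab_succ (k : ℕ) (c : ℝ) : ab (k+1) c = c * (c + (k+1)) ^ k := by
  simp [ab]

/-- Iterated forward difference of a polynomial of low degree vanishes. -/
lemma fwdDiff_iter_pow_eq_zero (d : ℕ) :
    ∀ (a : ℝ) (n : ℕ), d < n → (fwdDiff (1:ℝ) : (ℝ → ℝ) → (ℝ → ℝ))^[n] (fun t : ℝ => (a + t) ^ d) = 0 := by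
  induction d using Nat.strong_induction_on with
  | _ d IH =>
    intro a n hn
    obtain ⟨m, rfl⟩ : ∃ m, n = m + 1 := ⟨n - 1, by omega⟩
    rw [Function.iterate_succ_apply]
    have h1 : fwdDiff (1:ℝ) (fun t : ℝ => (a + t) ^ d)
        = ∑ j ∈ range d, (fun t : ℝ => (d.choose j : ℝ) • (a + t) ^ j) := by
      funext t
      simp only [fwdDiff, Finset.sum_apply]
      have : (a + (t + 1)) ^ d = ∑ j ∈ range (d + 1), (a + t) ^ j * (d.choose j : ℝ) := by
        rw [show a + (t + 1) = (a + t) + 1 by ring, add_pow]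
        simp
      rw [this, Finset.sum_range_succ]
      simp [smul_eq_mul]
      ring
    rw [h1, fwdDiff_iter_finset_sum]
    funext t
    simp only [Finset.sum_apply, Pi.zero_apply]
    apply Finset.sum_eq_zero
    intro j hj
    have hj' : j < d := Finset.mem_range.mp hj
    have := IH j hj' a m (by omega)
    have h2 : (fun t : ℝ => (d.choose j : ℝ) • (a + t) ^ j)
        = (d.choose j : ℝ) • (fun t : ℝ => (a + t) ^ j) := rfl
    rw [h2, fwdDiff_iter_const_smul, this]
    simp

/-- alternating sum of a polynomial of low degree vanishes -/
lemma alt_sum_pow (n d : ℕ) (hd : d < n) (a : ℝ) :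
    ∑ j ∈ range (n + 1), (-1 : ℝ) ^ (n - j) * (n.choose j : ℝ) * (a + j) ^ d = 0 := by
  have := congrFun (fwdDiff_iter_pow_eq_zero d a n hd) 0
  rw [fwdDiff_iter_eq_sum_shift] at this
  simp only [Pi.zero_apply] at this
  rw [← this]
  apply Finset.sum_congr rfl
  intro j hj
  rw [zsmul_eq_mul]
  push_cast
  ring_nf

/-- Abel–Hurwitz identity. -/
lemma abel_aux (n : ℕ) (a : ℝ) : ∀ b : ℝ,
    ∑ j ∈ range (n+1), (n.choose j : ℝ) * ab j a * (b + ((n - j : ℕ) : ℝ)) ^ (n - j)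
      = (a + b + n) ^ n := by
  induction n with
  | zero => intro b; simp
  | succ n IH =>
    intro b
    set F : ℝ → ℝ := fun y =>
      (∑ j ∈ range (n+2), (Nat.choose (n+1) j : ℝ) * ab j a
        * (y + ((n + 1 - j : ℕ) : ℝ)) ^ (n + 1 - j)) - (a + y + (n+1)) ^ (n+1) with hF
    have hderiv : ∀ y : ℝ, HasDerivAt F 0 y := by
      intro y
      have h1 : ∀ j ∈ range (n+2), HasDerivAt
          (fun y : ℝ => (Nat.choose (n+1) j : ℝ) * ab j a * (y + ((n + 1 - j : ℕ) : ℝ)) ^ (n + 1 - j))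
          ((Nat.choose (n+1) j : ℝ) * ab j a *
            ((n + 1 - j : ℕ) * (y + ((n + 1 - j : ℕ) : ℝ)) ^ (n + 1 - j - 1) * 1)) y := by
        intro j _
        exact (((hasDerivAt_id y).add_const _).pow _).const_mul _
      have h2 : HasDerivAt (fun y : ℝ => (a + y + (n+1)) ^ (n+1))
          (((n+1 : ℕ)) * (a + y + (n+1)) ^ n * 1) y := by
        have : HasDerivAt (fun y : ℝ => a + y + (n+1)) 1 y := by
          simpa using ((hasDerivAt_id y).const_add a).add_const ((n:ℝ)+1)
        simpa using this.fun_pow (n+1)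
      have hsum := HasDerivAt.fun_sum h1
      have : HasDerivAt F _ y := hsum.fun_sub h2
      convert this using 1
      rw [eq_comm, sub_eq_zero]
      -- compute the sum of derivatives
      have hlast : ∀ j ∈ range (n+2), (Nat.choose (n+1) j : ℝ) * ab j a *
            ((n + 1 - j : ℕ) * (y + ((n + 1 - j : ℕ) : ℝ)) ^ (n + 1 - j - 1) * 1)
          = (if j ≤ n then ((n+1 : ℝ)) * ((Nat.choose n j : ℝ) * ab j a
              * ((y+1) + ((n - j : ℕ) : ℝ)) ^ (n - j)) else 0) := by
        intro j hj
        rw [Finset.mem_range] at hj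
        by_cases hjn : j ≤ n
        · rw [if_pos hjn]
          have e1 : n + 1 - j - 1 = n - j := by omega
          have e0 : n + 1 - j = (n - j) + 1 := by omega
          have e3 : (Nat.choose (n+1) j : ℝ) * (((n - j : ℕ) : ℝ) + 1)
              = ((n:ℝ)+1) * (Nat.choose n j : ℝ) := by
            have h := Nat.choose_mul_succ_eq n j
            have h2 : ((n.choose j : ℝ)) * ((n:ℝ)+1)
                = ((n+1).choose j : ℝ) * (((n+1-j : ℕ) : ℝ)) := by exact_mod_cast h
            rw [e0] at h2
            push_cast at h2 ⊢
            linarith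
          rw [e1, e0]
          push_cast
          linear_combination (ab j a * (y + (((n - j : ℕ) : ℝ) + 1)) ^ (n - j)) * e3
        · have hj1 : j = n + 1 := by omega
          subst hj1
          simp
      rw [Finset.sum_congr rfl hlast, Finset.sum_range_succ, if_neg (by omega), add_zero,
        Finset.sum_ite_of_true (fun j hj => by rw [Finset.mem_range] at hj; omega),
        ← Finset.mul_sum]
      have hIH : ∑ j ∈ range (n + 1), (n.choose j : ℝ) * ab j a
          * (y + 1 + ((n - j : ℕ) : ℝ)) ^ (n - j) = (a + y + ((n:ℝ)+1)) ^ n := by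
        rw [IH (y+1)]; ring_nf
      rw [hIH]
      push_cast
      ring
    -- Now `F` has zero derivative everywhere, hence is constant; it vanishes at `-a-(n+1)`.
    have hconst : F b = F (-a - ((n:ℝ)+1)) :=
      is_const_of_deriv_eq_zero (fun y => (hderiv y).differentiableAt)
        (fun y => (hderiv y).deriv) _ _
    have hval : F (-a - ((n:ℝ)+1)) = 0 := by
      rw [hF]
      simp only
      have hterm : ∀ j ∈ range (n+2), (Nat.choose (n+1) j : ℝ) * ab j a *
            ((-a - ((n:ℝ)+1)) + ((n + 1 - j : ℕ) : ℝ)) ^ (n + 1 - j)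
          = (-1:ℝ)^(n+1-j) * (Nat.choose (n+1) j : ℝ) * (a * (a + (j:ℝ)) ^ n) := by
        intro j hj
        rw [Finset.mem_range] at hj
        have hcast : ((n + 1 - j : ℕ) : ℝ) = (n:ℝ) + 1 - (j:ℝ) := by
          have : j ≤ n + 1 := by omega
          push_cast [Nat.cast_sub this]
          ring
        have hbase : (-a - ((n:ℝ)+1)) + ((n + 1 - j : ℕ) : ℝ) = -(a + (j:ℝ)) := by
          rw [hcast]; ring
        rw [hbase, neg_pow]
        rcases Nat.eq_zero_or_pos j with hj0 | hj1
        · subst hj0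
          simp only [ab_zero, Nat.cast_zero, add_zero, Nat.sub_zero]
          rw [pow_succ]
          ring
        · obtain ⟨k, rfl⟩ : ∃ k, j = k + 1 := ⟨j - 1, by omega⟩
          rw [ab_succ]
          have : (a + ((k+1 : ℕ) : ℝ)) ^ k * (a + ((k+1:ℕ):ℝ)) ^ (n + 1 - (k+1)) =
              (a + ((k+1:ℕ):ℝ)) ^ n := by
            rw [← pow_add]
            congr 1
            omega
          push_cast at this ⊢
          linear_combination (((n+1).choose (k+1) : ℝ) * a * (-1:ℝ)^(n - k)) * this
      rw [Finset.sum_congr rfl hterm]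
      have hsum : ∑ j ∈ range (n+2), (-1:ℝ)^(n+1-j) * (Nat.choose (n+1) j : ℝ)
          * (a * (a + (j:ℝ)) ^ n)
          = a * ∑ j ∈ range (n+2), (-1:ℝ)^(n+1-j) * (Nat.choose (n+1) j : ℝ) * (a + (j:ℝ)) ^ n := by
        rw [Finset.mul_sum]
        apply Finset.sum_congr rfl
        intro j _
        ring
      rw [hsum, alt_sum_pow (n+1) n (by omega) a, mul_zero]
      have : a + (-a - ((n:ℝ)+1)) + ((n:ℝ)+1) = 0 := by ring
      rw [show a + (-a - ((n:ℝ)+1)) + ((n:ℝ)+1) = 0 by ring, zero_pow (by omega), sub_zero]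
    have hFb : F b = 0 := hconst.trans hval
    rw [hF] at hFb
    simp only [sub_eq_zero] at hFb
    convert hFb using 2 <;> push_cast <;> ring

/-- Abel's binomial theorem: the Abel polynomials are of binomial type. -/
lemma abel_binomial (n : ℕ) (a b : ℝ) :
    ∑ j ∈ range (n+1), (n.choose j : ℝ) * ab j a * ab (n-j) b = ab n (a+b) := by
  rcases n with _ | m
  · simp
  · have hsplit : ∀ j ∈ range (m+2), ((m+1).choose j : ℝ) * ab j a * ab (m+1-j) b
        = ((m+1).choose j : ℝ) * ab j a * (b + ((m+1-j : ℕ) : ℝ)) ^ (m+1-j)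
          - ((m+1).choose j : ℝ) * ab j a *
            (((m+1-j : ℕ) : ℝ) * (b + ((m+1-j : ℕ) : ℝ)) ^ (m+1-j-1)) := by
      intro j hj
      rw [Finset.mem_range] at hj
      rcases Nat.eq_zero_or_pos (m+1-j) with h0 | h1
      · rw [h0]; simp
      · obtain ⟨k, hk⟩ : ∃ k, m+1-j = k + 1 := ⟨m - j, by omega⟩
        rw [hk]
        rw [ab_succ]
        have : (b + ((k+1 : ℕ) : ℝ)) ^ (k+1) = (b + ((k+1:ℕ):ℝ)) ^ k * (b + ((k+1:ℕ):ℝ)) :=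
          pow_succ _ _
        push_cast at this ⊢
        rw [this]
        ring
    rw [Finset.sum_congr rfl hsplit, Finset.sum_sub_distrib, abel_aux (m+1) a b]
    have hT : ∑ j ∈ range (m+2), ((m+1).choose j : ℝ) * ab j a *
          (((m+1-j : ℕ) : ℝ) * (b + ((m+1-j : ℕ) : ℝ)) ^ (m+1-j-1))
        = ((m:ℝ)+1) * (a + (b+1) + (m:ℝ)) ^ m := by
      rw [Finset.sum_range_succ]
      have hlast : ((m+1).choose (m+1) : ℝ) * ab (m+1) a *
          (((m+1-(m+1) : ℕ) : ℝ) * (b + ((m+1-(m+1) : ℕ) : ℝ)) ^ (m+1-(m+1)-1)) = 0 := by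
        simp
      rw [hlast, add_zero]
      have hterm : ∀ j ∈ range (m+1), ((m+1).choose j : ℝ) * ab j a *
            (((m+1-j : ℕ) : ℝ) * (b + ((m+1-j : ℕ) : ℝ)) ^ (m+1-j-1))
          = ((m:ℝ)+1) * ((m.choose j : ℝ) * ab j a * ((b+1) + ((m-j : ℕ) : ℝ)) ^ (m-j)) := by
        intro j hj
        rw [Finset.mem_range] at hj
        have e0 : m + 1 - j = (m - j) + 1 := by omega
        have e1 : m + 1 - j - 1 = m - j := by omega
        have e3 : ((m+1).choose j : ℝ) * (((m - j : ℕ) : ℝ) + 1)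
            = ((m:ℝ)+1) * (m.choose j : ℝ) := by
          have h := Nat.choose_mul_succ_eq m j
          have h2 : ((m.choose j : ℝ)) * ((m:ℝ)+1)
              = ((m+1).choose j : ℝ) * (((m+1-j : ℕ) : ℝ)) := by exact_mod_cast h
          rw [e0] at h2
          push_cast at h2 ⊢
          linarith
        rw [e1, e0]
        push_cast
        linear_combination (ab j a * ((b + (((m - j : ℕ) : ℝ) + 1)) ^ (m - j))) * e3
      rw [Finset.sum_congr rfl hterm, ← Finset.mul_sum, abel_aux m a (b+1)]
    rw [hT]
    rw [show ab (m+1) (a+b) = (a+b) * ((a+b) + ((m:ℝ)+1)) ^ m by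
      rw [ab_succ]]
    have hp : (a + b + ((m+1 : ℕ) : ℝ)) ^ (m+1)
        = (a + b + ((m:ℝ)+1)) ^ m * (a + b + ((m:ℝ)+1)) := by
      push_cast; exact pow_succ _ _
    rw [hp]
    have : a + (b+1) + (m:ℝ) = a + b + ((m:ℝ)+1) := by ring
    rw [this]
    ring

lemma ab_nonneg (k : ℕ) {c : ℝ} (hc : 0 ≤ c) : 0 ≤ ab k c := by
  rcases k with _ | k
  · simp
  · rw [ab_succ]; positivity

lemma factorial_lower : ∃ A : ℝ, 0 < A ∧ ∀ k : ℕ,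
    A * Real.sqrt (2 * ((k:ℝ)+1)) * (((k:ℝ)+1) / Real.exp 1) ^ (k+1) ≤ ((k+1).factorial : ℝ) := by
  obtain ⟨A, hA0, hA⟩ := Stirling.stirlingSeq'_bounded_by_pos_constant
  refine ⟨A, hA0, fun k => ?_⟩
  have h := hA k
  rw [Stirling.stirlingSeq, le_div_iff₀ (by positivity)] at h
  · calc A * Real.sqrt (2 * ((k:ℝ)+1)) * (((k:ℝ)+1) / Real.exp 1) ^ (k+1)
        = A * (Real.sqrt (2 * (((k+1:ℕ):ℝ))) * ((((k+1:ℕ):ℝ)) / Real.exp 1) ^ (k+1)) := by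
          push_cast; ring
      _ ≤ ((k+1).factorial : ℝ) := by rw [mul_comm] at h; linarith [h]

lemma ab_term_summable {c x : ℝ} (hc0 : 0 ≤ c) (hc1 : c ≤ 1) (hx0 : 0 ≤ x)
    (hx1 : x ≤ 1 / Real.exp 1) :
    Summable (fun k : ℕ => ab k c * x ^ k / (k.factorial : ℝ)) := by
  obtain ⟨A, hA0, hA⟩ := factorial_lower
  set C : ℝ := Real.exp 1 / (A * Real.sqrt 2) with hC
  have hC0 : 0 ≤ C := by positivity
  rw [← summable_nat_add_iff 1]
  have hg : Summable (fun k : ℕ => C * (1 / (((k:ℝ)+1) ^ ((3:ℝ)/2)))) := by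
    apply Summable.mul_left
    have h := (Real.summable_one_div_nat_rpow (p := 3/2)).mpr (by norm_num)
    exact (summable_nat_add_iff 1).mpr h |>.congr (fun k => by push_cast; ring_nf)
  apply Summable.of_nonneg_of_le _ _ hg
  · intro k
    have := ab_nonneg (k+1) hc0
    positivity
  · intro k
    set N : ℝ := (k:ℝ) + 1 with hN
    have hN0 : 0 < N := by positivity
    have hNn : N = ((k+1 : ℕ) : ℝ) := by push_cast; ring
    have hfac0 : (0:ℝ) < ((k+1).factorial : ℝ) := by positivity
    have hrpow : N ^ ((3:ℝ)/2) = N * Real.sqrt N := by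
      rw [show (3:ℝ)/2 = 1 + 1/2 by norm_num, Real.rpow_add hN0, Real.rpow_one,
        ← Real.sqrt_eq_rpow]
    -- Step 1: bound numerator
    have hab : ab (k+1) c ≤ (1 + N) ^ k := by
      rw [ab_succ]
      have h1 : (c + ((k:ℝ)+1)) ^ k ≤ (1 + N) ^ k := by
        apply pow_le_pow_left₀ (by positivity) (by rw [hN]; linarith)
      calc c * (c + ((k:ℝ)+1)) ^ k ≤ 1 * (1 + N) ^ k :=
            mul_le_mul hc1 h1 (by positivity) zero_le_one
        _ = (1 + N) ^ k := one_mul _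
    have hxle : x ^ (k+1) ≤ ((Real.exp 1)⁻¹) ^ (k+1) := by
      apply pow_le_pow_left₀ hx0
      rwa [one_div] at hx1
    have hexp : (1 + N) ^ (k+1) ≤ Real.exp 1 * N ^ (k+1) := by
      have h5 : 1 + N ≤ N * Real.exp (1/N) := by
        have h6 := Real.add_one_le_exp (1/N)
        have : N * (1/N + 1) ≤ N * Real.exp (1/N) :=
          mul_le_mul_of_nonneg_left h6 hN0.le
        calc 1 + N = N * (1/N + 1) := by field_simp
          _ ≤ N * Real.exp (1/N) := this
      calc (1 + N) ^ (k+1) ≤ (N * Real.exp (1/N)) ^ (k+1) :=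
            pow_le_pow_left₀ (by positivity) h5 _
        _ = N ^ (k+1) * Real.exp (1/N) ^ (k+1) := mul_pow _ _ _
        _ = N ^ (k+1) * Real.exp (((k+1:ℕ):ℝ) * (1/N)) := by rw [Real.exp_nat_mul]
        _ = Real.exp 1 * N ^ (k+1) := by
            rw [← hNn, mul_one_div, div_self hN0.ne']
            ring
    -- main chain
    have hD0 : (0:ℝ) < A * Real.sqrt (2 * N) * (N / Real.exp 1) ^ (k+1) := by positivity
    have habnn := ab_nonneg (k+1) hc0
    calc ab (k+1) c * x ^ (k+1) / ((k+1).factorial : ℝ)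
        ≤ (1 + N) ^ k * ((Real.exp 1)⁻¹) ^ (k+1) / ((k+1).factorial : ℝ) := by
          have hmm := mul_le_mul hab hxle (by positivity) (by positivity : (0:ℝ) ≤ (1+N)^k)
          exact div_le_div_of_nonneg_right hmm hfac0.le
      _ ≤ (1 + N) ^ k * ((Real.exp 1)⁻¹) ^ (k+1)
            / (A * Real.sqrt (2 * N) * (N / Real.exp 1) ^ (k+1)) :=
          div_le_div_of_nonneg_left (by positivity) hD0 (hA k)
      _ = (1 + N) ^ k / (A * Real.sqrt (2 * N) * N ^ (k+1)) := by
          rw [div_pow, div_eq_mul_inv (N ^ (k+1)), ← inv_pow]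
          rw [show A * Real.sqrt (2*N) * (N ^ (k+1) * ((Real.exp 1)⁻¹) ^ (k+1))
              = A * Real.sqrt (2*N) * N ^ (k+1) * ((Real.exp 1)⁻¹) ^ (k+1) by ring]
          rw [mul_div_mul_right _ _ (by positivity)]
      _ ≤ C * (1 / (N ^ ((3:ℝ)/2))) := by
          rw [hrpow, mul_one_div, div_le_div_iff₀ (by positivity) (by positivity)]
          have hsq : Real.sqrt (2 * N) = Real.sqrt 2 * Real.sqrt N :=
            Real.sqrt_mul (by norm_num) N
          have hRHS : C * (A * Real.sqrt (2*N) * N ^ (k+1))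
              = Real.exp 1 * N ^ (k+1) * Real.sqrt N := by
            rw [hsq, hC]
            field_simp
          rw [hRHS]
          have h6 : (1+N)^k * N ≤ (1+N)^(k+1) := by
            rw [pow_succ]
            exact mul_le_mul_of_nonneg_left (by linarith) (pow_nonneg (by linarith) k)
          calc (1 + N) ^ k * (N * Real.sqrt N) = ((1+N)^k * N) * Real.sqrt N := by ring
            _ ≤ (1+N)^(k+1) * Real.sqrt N :=
                mul_le_mul_of_nonneg_right h6 (Real.sqrt_nonneg N)
            _ ≤ (Real.exp 1 * N^(k+1)) * Real.sqrt N :=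
                mul_le_mul_of_nonneg_right hexp (Real.sqrt_nonneg N)
            _ = Real.exp 1 * N ^ (k+1) * Real.sqrt N := by ring
      _ = C * (1 / (((k:ℝ)+1) ^ ((3:ℝ)/2))) := by rw [hN]

/-- The exponential generating function of the Abel polynomials. -/
noncomputable def abF (c x : ℝ) : ℝ := ∑' k : ℕ, ab k c * x ^ k / (k.factorial : ℝ)

lemma abF_mul {c d x : ℝ} (hc0 : 0 ≤ c) (hc1 : c ≤ 1) (hd0 : 0 ≤ d) (hd1 : d ≤ 1)
    (hx0 : 0 ≤ x) (hx1 : x ≤ 1 / Real.exp 1) :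
    abF c x * abF d x = abF (c+d) x := by
  have hsc : Summable (fun k : ℕ => ‖ab k c * x ^ k / (k.factorial : ℝ)‖) := by
    apply (ab_term_summable hc0 hc1 hx0 hx1).congr
    intro k
    rw [Real.norm_of_nonneg (by have := ab_nonneg k hc0; positivity)]
  have hsd : Summable (fun k : ℕ => ‖ab k d * x ^ k / (k.factorial : ℝ)‖) := by
    apply (ab_term_summable hd0 hd1 hx0 hx1).congr
    intro k
    rw [Real.norm_of_nonneg (by have := ab_nonneg k hd0; positivity)]
  rw [abF, abF, tsum_mul_tsum_eq_tsum_sum_antidiagonal_of_summable_norm hsc hsd]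
  rw [abF]
  apply tsum_congr
  intro n
  rw [Finset.Nat.sum_antidiagonal_eq_sum_range_succ
    (f := fun i j => ab i c * x ^ i / (i.factorial : ℝ) * (ab j d * x ^ j / (j.factorial : ℝ)))]
  have hterm : ∀ j ∈ Finset.range (n+1),
      ab j c * x ^ j / (j.factorial : ℝ) * (ab (n-j) d * x ^ (n-j) / ((n-j).factorial : ℝ))
      = (n.choose j : ℝ) * ab j c * ab (n-j) d * (x ^ n / (n.factorial : ℝ)) := by
    intro j hj
    rw [Finset.mem_range] at hj
    have hjn : j ≤ n := by omega
    have hfac : ((n.choose j : ℕ) : ℝ) * (j.factorial : ℝ) * ((n-j).factorial : ℝ)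
        = (n.factorial : ℝ) := by
      exact_mod_cast congrArg (Nat.cast (R := ℝ)) (Nat.choose_mul_factorial_mul_factorial hjn)
    have hx : x ^ j * x ^ (n-j) = x ^ n := by
      rw [← pow_add]
      congr 1
      omega
    have hj0 : (j.factorial : ℝ) ≠ 0 := by positivity
    have hnj0 : ((n-j).factorial : ℝ) ≠ 0 := by positivity
    have hn0 : (n.factorial : ℝ) ≠ 0 := by positivity
    field_simp
    linear_combination (ab j c * ab (n-j) d * (n.factorial:ℝ)) * hx - (ab j c * ab (n-j) d * x ^ n) * hfac
  rw [Finset.sum_congr rfl hterm, ← Finset.sum_mul, abel_binomial n c d]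
  ring

lemma abF_pow {m : ℕ} (hm : 0 < m) (j : ℕ) (hj : 1 ≤ j) (hjm : j ≤ m)
    {x : ℝ} (hx0 : 0 ≤ x) (hx1 : x ≤ 1 / Real.exp 1) :
    abF (1/(m:ℝ)) x ^ j = abF ((j:ℝ)/(m:ℝ)) x := by
  induction j with
  | zero => omega
  | succ j IH =>
    rcases Nat.eq_zero_or_pos j with h0 | h1
    · subst h0
      simp
    · have hm' : (0:ℝ) < m := by exact_mod_cast hm
      have hjm' : j ≤ m := by omega
      rw [pow_succ, IH h1 hjm']
      rw [abF_mul (by positivity) (by rw [div_le_one hm']; exact_mod_cast hjm')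
        (by positivity) (by rw [div_le_one hm']; exact_mod_cast hm) hx0 hx1]
      congr 1
      push_cast
      field_simp

lemma g_eq_abF {m : ℝ} (hm : 0 < m) (x : ℝ) :
    (∑' k : ℕ, ((k : ℝ) * m + 1) ^ (k - 1) * x ^ k / (m ^ k * (Nat.factorial k : ℝ)))
      = abF (1/m) x := by
  rw [abF]
  apply tsum_congr
  intro k
  rcases k with _ | k
  · simp
  · rw [ab_succ]
    have hmne : m ≠ 0 := hm.ne'
    have : (1/m + ((k:ℝ)+1)) = (((k:ℝ)+1) * m + 1) / m := by field_simp; ring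
    push_cast
    rw [this, div_pow, pow_succ]
    field_simp
    ring

/-- `g m x = ∑_{k=0}^∞ (km+1)^{k-1} x^k / (m^k k!)`, where the factor `(km+1)^{k-1}` for
`k = 0` is interpreted as `1` (here via `ℕ`-subtraction in the exponent, which gives
`(0·m+1)^0 = 1`). -/
noncomputable def g (m x : ℝ) : ℝ :=
  ∑' k : ℕ, ((k : ℝ) * m + 1) ^ (k - 1) * x ^ k / (m ^ k * (Nat.factorial k : ℝ))

theorem g_pow_eq (m : ℕ) (hm : 0 < m) (x : ℝ) (hx0 : 0 ≤ x) (hx1 : x ≤ 1 / Real.exp 1) :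
    g (m : ℝ) x ^ m = g 1 x := by
  have hm' : (0:ℝ) < m := by exact_mod_cast hm
  rw [g, g, g_eq_abF hm' x, g_eq_abF one_pos x]
  rw [abF_pow hm m hm le_rfl hx0 hx1]
  norm_num [div_self hm'.ne']
end

section
/- For every positive real number m and every real number x with |x| ≤ 1/e, the series defining g(m,x) is absolutely summable: the sequence k ↦ (km+1)^{k-1} x^k / (m^k k!) is summable over ℕ (indeed absolutely summable) whenever |x| ≤ 1/e. -/
open Real

lemma sqrt_pi_le_stirling (n : ℕ) : Real.sqrt Real.pi ≤ Stirling.stirlingSeq (n+1) := by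
  have h := Stirling.stirlingSeq'_antitone.le_of_tendsto
    ((Filter.tendsto_add_atTop_iff_nat 1).2 Stirling.tendsto_stirlingSeq_sqrt_pi) n
  simpa using h

lemma factorial_lower_s12 (n : ℕ) (hn : 1 ≤ n) :
    Real.sqrt (2*n) * ((n : ℝ)/Real.exp 1)^n ≤ (Nat.factorial n : ℝ) := by
  obtain ⟨k, rfl⟩ := Nat.exists_eq_add_of_le hn
  have h1 : (1:ℝ) ≤ Real.sqrt Real.pi := by
    rw [show (1:ℝ) = Real.sqrt 1 by simp]
    exact Real.sqrt_le_sqrt (by linarith [Real.pi_gt_three])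
  have h2 := (h1.trans (sqrt_pi_le_stirling k))
  rw [Stirling.stirlingSeq] at h2
  have hpos : 0 < Real.sqrt (2*((k:ℝ)+1)) * (((k:ℝ)+1)/Real.exp 1)^(k+1) := by
    positivity
  rw [le_div_iff₀ (by convert hpos using 3 <;> push_cast <;> rfl), one_mul] at h2
  rw [Nat.add_comm 1 k]; exact h2

lemma term_bound_s12 (m : ℝ) (hm : 0 < m) (x : ℝ) (hx : |x| ≤ 1 / Real.exp 1)
    (hfac : ∀ n : ℕ, 1 ≤ n → Real.sqrt (2*n) * ((n : ℝ)/Real.exp 1)^n ≤ (Nat.factorial n : ℝ))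
    (n : ℕ) :
    |(((n+1 : ℕ) : ℝ) * m + 1) ^ ((n+1) - 1) * x ^ (n+1) / (m ^ (n+1) * (Nat.factorial (n+1) : ℝ))|
      ≤ (Real.exp (1/m) / (m * Real.sqrt 2)) * (1 / (((n:ℝ)+1) ^ (3/2 : ℝ))) := by
  simp only [Nat.add_sub_cancel]
  push_cast
  set K : ℝ := (n : ℝ) + 1 with hKdef
  have hK : (1:ℝ) ≤ K := by simp [hKdef]
  have hKpos : (0:ℝ) < K := by linarith
  have hmK : (0:ℝ) < m * K := by positivity
  have hepos : (0:ℝ) < Real.exp 1 := Real.exp_pos 1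
  have habs : |(K * m + 1) ^ n * x ^ (n+1) / (m ^ (n+1) * (Nat.factorial (n+1) : ℝ))|
      = (K * m + 1) ^ n * |x| ^ (n+1) / (m ^ (n+1) * (Nat.factorial (n+1) : ℝ)) := by
    rw [abs_div, abs_mul, abs_pow, abs_pow, abs_of_pos (by positivity : (0:ℝ) < K * m + 1),
      abs_of_pos (by positivity : (0:ℝ) < m ^ (n+1) * (Nat.factorial (n+1) : ℝ))]
  rw [habs]
  have hb1 : |x| ^ (n+1) ≤ ((Real.exp 1)⁻¹) ^ (n+1) := by
    apply pow_le_pow_left₀ (abs_nonneg x)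
    rwa [one_div] at hx
  have hb2 : (K * m + 1) ^ n ≤ (m * K) ^ n * Real.exp (1/m) := by
    have h21 : K * m + 1 = (m * K) * (1 + 1/(m*K)) := by field_simp
    have h22 : (1 + 1/(m*K)) ^ n ≤ Real.exp (1/m) := by
      calc (1 + 1/(m*K)) ^ n ≤ (Real.exp (1/(m*K))) ^ n := by
            apply pow_le_pow_left₀ (by positivity)
            linarith [Real.add_one_le_exp (1/(m*K))]
        _ = Real.exp (n * (1/(m*K))) := by rw [← Real.exp_nat_mul]
        _ ≤ Real.exp (1/m) := by
            apply Real.exp_le_exp.2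
            rw [mul_one_div]
            calc (n:ℝ)/(m*K) ≤ K/(m*K) := by gcongr; · linarith
              _ = 1/m := by field_simp
    calc (K * m + 1) ^ n = (m*K)^n * (1 + 1/(m*K))^n := by rw [h21, mul_pow]
      _ ≤ (m*K)^n * Real.exp (1/m) := by gcongr
  have hb3 : Real.sqrt (2*K) * (K/Real.exp 1)^(n+1) ≤ (Nat.factorial (n+1) : ℝ) := by
    have := hfac (n+1) (by omega)
    convert this using 3 <;> push_cast <;> ring
  have hb3pos : (0:ℝ) < Real.sqrt (2*K) * (K/Real.exp 1)^(n+1) := by positivity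
  calc (K * m + 1) ^ n * |x| ^ (n+1) / (m ^ (n+1) * (Nat.factorial (n+1) : ℝ))
      ≤ ((m * K) ^ n * Real.exp (1/m)) * ((Real.exp 1)⁻¹) ^ (n+1)
        / (m ^ (n+1) * (Real.sqrt (2*K) * (K/Real.exp 1)^(n+1))) := by
        gcongr
    _ = (Real.exp (1/m) / (m * Real.sqrt 2)) * (1 / (K ^ (3/2 : ℝ))) := by
        have hs2 : Real.sqrt (2*K) = Real.sqrt 2 * Real.sqrt K := Real.sqrt_mul (by norm_num) K
        have hK32 : K ^ (3/2 : ℝ) = K * Real.sqrt K := by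
          rw [show (3/2:ℝ) = 1 + 1/2 by norm_num, Real.rpow_add hKpos, Real.rpow_one,
            ← Real.sqrt_eq_rpow]
        rw [hK32, hs2]
        have hsK : (0:ℝ) < Real.sqrt K := Real.sqrt_pos.2 hKpos
        have hs2' : (0:ℝ) < Real.sqrt 2 := by positivity
        set E := Real.exp 1 with hE
        rw [div_pow, mul_pow, pow_succ, pow_succ]
        field_simp
        rw [one_div, inv_pow]; field_simp; ring

theorem g_abs_summable (m : ℝ) (hm : 0 < m) (x : ℝ) (hx : |x| ≤ 1 / Real.exp 1) :
    Summable (fun k : ℕ =>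
        ((k : ℝ) * m + 1) ^ (k - 1) * x ^ k / (m ^ k * (Nat.factorial k : ℝ))) ∧
      Summable (fun k : ℕ =>
        |((k : ℝ) * m + 1) ^ (k - 1) * x ^ k / (m ^ k * (Nat.factorial k : ℝ))|) := by
  have habs : Summable (fun k : ℕ =>
      |((k : ℝ) * m + 1) ^ (k - 1) * x ^ k / (m ^ k * (Nat.factorial k : ℝ))|) := by
    rw [← summable_nat_add_iff 1]
    have h0 : Summable (fun n : ℕ => 1/(n:ℝ)^(3/2:ℝ)) :=
      Real.summable_one_div_nat_rpow.2 (by norm_num)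
    have hC : Summable (fun n : ℕ =>
        (Real.exp (1/m) / (m * Real.sqrt 2)) * (1 / (((n:ℝ)+1) ^ (3/2 : ℝ)))) := by
      have := ((summable_nat_add_iff 1).2 h0).mul_left (Real.exp (1/m) / (m * Real.sqrt 2))
      simpa using this
    exact Summable.of_nonneg_of_le (fun n => abs_nonneg _)
      (fun n => term_bound_s12 m hm x hx factorial_lower_s12 n) hC
  exact ⟨habs.of_abs, habs⟩
end

section
/- For every real number c > 1, there exists exactly one real number z with 0 < z < 1 satisfying z = e^{-c(1-z)}. -/
/-- If `a` is a root of `log x = -c(1-x)` with `0 < a < b < 1`, then `b` is not a root,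
by strict concavity of `log` (since `1` is also a root). -/
lemma not_root_of_between (c a b : ℝ) (ha0 : 0 < a) (hab : a < b) (hb1 : b < 1)
    (hroot : Real.log a = -c * (1 - a)) : Real.log b ≠ -c * (1 - b) := by
  have ha1 : a < 1 := hab.trans hb1
  have h1a : (0:ℝ) < 1 - a := by linarith
  set s : ℝ := (1 - b) / (1 - a) with hs
  set t : ℝ := (b - a) / (1 - a) with ht
  have hs0 : 0 < s := div_pos (by linarith) h1a
  have ht0 : 0 < t := div_pos (by linarith) h1a
  have hst : s + t = 1 := by
    rw [hs, ht, ← add_div, div_eq_one_iff_eq (ne_of_gt h1a)]; ring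
  have hcomb : s • a + t • (1:ℝ) = b := by
    simp only [smul_eq_mul, hs, ht]
    field_simp
    ring
  have hconc := strictConcaveOn_log_Ioi.2 (Set.mem_Ioi.mpr ha0)
    (Set.mem_Ioi.mpr one_pos) (ne_of_lt ha1) hs0 ht0 hst
  rw [hcomb, Real.log_one] at hconc
  have hsa : s * (1 - a) = 1 - b := div_mul_cancel₀ _ (ne_of_gt h1a)
  have : -c * (1 - b) < Real.log b := by
    calc -c * (1 - b) = s * (-c * (1 - a)) := by rw [← hsa]; ring
    _ = s • Real.log a + t • (0:ℝ) := by rw [hroot]; simp [smul_eq_mul]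
    _ < Real.log b := hconc
  exact fun h => absurd h (by linarith)

theorem existsUnique_fixed_point (c : ℝ) (hc : 1 < c) :
    ∃! z : ℝ, 0 < z ∧ z < 1 ∧ z = Real.exp (-c * (1 - z)) := by
  have hc0 : (0:ℝ) < c := by linarith
  -- h z = log z + c (1 - z)
  set h : ℝ → ℝ := fun z => Real.log z + c * (1 - z) with hh
  have hec : c < Real.exp c := by
    have := Real.add_one_lt_exp (x := c) (by linarith)
    linarith
  set A : ℝ := Real.exp (-c) with hA
  set B : ℝ := 1 / c with hB
  have hA0 : 0 < A := Real.exp_pos _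
  have hAB : A < B := by
    rw [hA, hB, Real.exp_neg, ← one_div]
    exact one_div_lt_one_div_of_lt hc0 hec
  have hB1 : B < 1 := by rw [hB]; exact (div_lt_one hc0).mpr hc
  have hhA : h A < 0 := by
    have : h A = -c * A := by
      simp [hh, hA, Real.log_exp]
      ring
    rw [this]
    exact mul_neg_of_neg_of_pos (by linarith) hA0
  have hhB : 0 < h B := by
    have hlog : Real.log c < c - 1 := Real.log_lt_sub_one_of_pos hc0 (by linarith)
    have : h B = -Real.log c + (c - 1) := by
      simp [hh, hB, Real.log_div, ne_of_gt hc0, Real.log_one]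
      field_simp
    rw [this]; linarith
  have hcont : ContinuousOn h (Set.Icc A B) := by
    intro x hx
    have hx0 : x ≠ 0 := ne_of_gt (lt_of_lt_of_le hA0 hx.1)
    exact ((Real.continuousAt_log hx0).add ((continuous_const.mul (continuous_const.sub continuous_id)).continuousAt)).continuousWithinAt
  have hIVT := intermediate_value_Icc (le_of_lt hAB) hcont
  have h0mem : (0:ℝ) ∈ Set.Icc (h A) (h B) := ⟨le_of_lt hhA, le_of_lt hhB⟩
  obtain ⟨z, hzmem, hz0⟩ := hIVT h0mem
  have hz_pos : 0 < z := lt_of_lt_of_le hA0 hzmem.1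
  have hz_lt1 : z < 1 := lt_of_le_of_lt hzmem.2 hB1
  have hzlog : Real.log z = -c * (1 - z) := by
    have : Real.log z + c * (1 - z) = 0 := hz0
    linarith
  refine ⟨z, ⟨hz_pos, hz_lt1, ?_⟩, ?_⟩
  · rw [← hzlog, Real.exp_log hz_pos]
  · rintro y ⟨hy0, hy1, hy⟩
    have hylog : Real.log y = -c * (1 - y) := by
      nth_rewrite 1 [hy]
      rw [Real.log_exp]
    rcases lt_trichotomy y z with hlt | heq | hgt
    · exact absurd hzlog (not_root_of_between c y z hy0 hlt hz_lt1 hylog)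
    · exact heq
    · exact absurd hylog (not_root_of_between c z y hz_pos hgt hy1 hzlog)
end

section
/- For any positive integers n, p, and q, the following coefficient identity holds: ∑_{j_1+⋯+j_p=n} ∏_{t=1}^p q(j_t p + q)^{j_t - 1}/(p^{j_t} j_t!) = ∑_{i_1+⋯+i_q=n} ∏_{t=1}^q (i_t + 1)^{i_t - 1}/(i_t!), where the first sum ranges over all p-tuples of nonnegative integers summing to n, the second over all q-tuples of nonnegative integers summing to n, and each factor of the form x^{a-1} with a = 0 is interpreted as x^{-1}. -/
open Finset Polynomial

lemma fd0 (m : ℕ) : ∀ (P : Polynomial ℝ), P.degree < m → ∀ x : ℝ,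
    ∑ k ∈ Finset.range (m+1), (-1:ℝ)^k * (m.choose k) * P.eval (x + k) = 0 := by
  induction m with
  | zero =>
    intro P hP x
    have : P = 0 := Polynomial.degree_eq_bot.mp (Nat.WithBot.lt_zero_iff.mp (by exact_mod_cast hP))
    simp [this]
  | succ m ih =>
    intro P hP x
    set Q : Polynomial ℝ := P - P.comp (X + C 1) with hQ
    have hQeval : ∀ z : ℝ, Q.eval z = P.eval z - P.eval (z + 1) := by
      intro z; simp [hQ]
    have hQdeg : Q.degree < m := by
      rcases eq_or_ne P 0 with h0 | h0
      · have : Q = 0 := by simp [hQ, h0]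
        rw [this, Polynomial.degree_zero]
        exact WithBot.bot_lt_coe m
      · have hq : (X + C (1:ℝ)).natDegree = 1 := Polynomial.natDegree_X_add_C 1
        have hqlc : (X + C (1:ℝ)).leadingCoeff = 1 := (Polynomial.monic_X_add_C 1).leadingCoeff
        have hC : P.comp (X + C 1) ≠ 0 := by
          intro h
          have hlc := Polynomial.leadingCoeff_comp (p := P) (q := X + C (1:ℝ)) (by rw [hq]; norm_num)
          rw [h, hqlc] at hlc
          simp at hlc
          exact h0 (Polynomial.leadingCoeff_eq_zero.mp hlc.symm)
        have hdeg_eq : (P.comp (X + C 1)).degree = P.degree := by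
          rw [Polynomial.degree_eq_natDegree hC, Polynomial.degree_eq_natDegree h0,
            Polynomial.natDegree_comp, hq, mul_one]
        have hlc : P.leadingCoeff = (P.comp (X + C 1)).leadingCoeff := by
          rw [Polynomial.leadingCoeff_comp (by rw [hq]; norm_num), hqlc, one_pow, mul_one]
        have h1 : Q.degree < P.degree := Polynomial.degree_sub_lt hdeg_eq.symm h0 hlc
        have h2 : P.degree ≤ (m : WithBot ℕ) := by
          rw [Polynomial.degree_eq_natDegree h0] at hP ⊢
          exact_mod_cast Nat.lt_succ_iff.mp (by exact_mod_cast hP)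
        exact lt_of_lt_of_le h1 h2
    have key : ∑ k ∈ Finset.range (m+2), (-1:ℝ)^k * ((m+1).choose k) * P.eval (x + k)
        = ∑ k ∈ Finset.range (m+1), (-1:ℝ)^k * (m.choose k) * Q.eval (x + k) := by
      have e1 : ∀ k ∈ Finset.range (m+1), (-1:ℝ)^k * (m.choose k) * Q.eval (x + k)
          = (-1:ℝ)^k * (m.choose k) * P.eval (x + k)
            - (-1:ℝ)^k * (m.choose k) * P.eval (x + (k+1)) := by
        intro k _
        rw [hQeval]
        push_cast
        ring
      rw [Finset.sum_congr rfl e1, Finset.sum_sub_distrib]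
      rw [Finset.sum_range_succ' (fun k => (-1:ℝ)^k * ((m+1).choose k) * P.eval (x + k)) (m+1)]
      rw [Finset.sum_range_succ' (fun k => (-1:ℝ)^k * (m.choose k) * P.eval (x + k)) m]
      have ext1 : ∑ k ∈ Finset.range (m+1), (-1:ℝ)^(k+1) * (m.choose (k+1)) * P.eval (x + ((k+1:ℕ):ℝ))
          = ∑ k ∈ Finset.range m, (-1:ℝ)^(k+1) * (m.choose (k+1)) * P.eval (x + ((k+1:ℕ):ℝ)) := by
        rw [Finset.sum_range_succ]
        simp [Nat.choose_succ_self]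
      have pas : ∀ k ∈ Finset.range (m+1),
          (-1:ℝ)^(k+1) * ((m+1).choose (k+1)) * P.eval (x + ((k:ℕ)+1 : ℕ))
          = (-1:ℝ)^(k+1) * (m.choose (k+1)) * P.eval (x + ((k:ℕ)+1:ℕ))
            - (-1:ℝ)^k * (m.choose k) * P.eval (x + ((k:ℝ) + 1)) := by
        intro k _
        rw [Nat.choose_succ_succ]
        push_cast
        ring
      rw [Finset.sum_congr rfl pas, Finset.sum_sub_distrib, ext1]
      simp only [Nat.choose_zero_right, Nat.cast_one, push_cast]
      push_cast
      ring
    rw [key]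
    exact ih Q hQdeg x

lemma negpow_sub {a b : ℕ} (h : b ≤ a) : (-1:ℝ)^(a-b) = (-1)^a * (-1)^b := by
  have h1 : (-1:ℝ)^(a-b) * (-1)^b = (-1)^a := by rw [← pow_add]; congr 1; omega
  have h2 : (-1:ℝ)^b * (-1)^b = 1 := by rw [← pow_add]; exact Even.neg_one_pow ⟨b, rfl⟩
  calc (-1:ℝ)^(a-b) = (-1)^(a-b) * ((-1)^b * (-1)^b) := by rw [h2, mul_one]
  _ = (-1)^a * (-1)^b := by rw [← mul_assoc, h1]

lemma choose_mul_choose_sub {n a b : ℕ} (h : a + b ≤ n) :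
    n.choose a * (n-a).choose b = n.choose b * (n-b).choose a := by
  have h1 := Nat.choose_mul (n := n) (k := a + b) (s := a) (by omega)
  have h2 := Nat.choose_mul (n := n) (k := a + b) (s := b) (by omega)
  rw [Nat.add_sub_cancel_left] at h1
  rw [Nat.add_sub_cancel] at h2
  rw [← h1, ← h2, Nat.choose_symm_add]

noncomputable def G (x : ℝ) (k : ℕ) : ℝ := if k = 0 then 1 else x * (x + k)^(k-1)

@[simp] lemma G_zero (x : ℝ) : G x 0 = 1 := rfl

lemma G_succ (x : ℝ) (k : ℕ) : G x (k+1) = x * (x + ((k+1:ℕ):ℝ))^k := by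
  simp [G]

lemma abelA (n : ℕ) (x y : ℝ) :
    ∑ k ∈ Finset.range (n+1), (n.choose k : ℝ) * G x k * (y + ((n - k : ℕ):ℝ)) ^ (n - k)
      = (x + y + n)^n := by
  set T : ℕ → ℕ → ℝ := fun k j => (n.choose (k+1) : ℝ) * (x * (x + ((k+1:ℕ):ℝ))^k) *
    ((x+y+(n:ℝ))^j * (-(x+((k+1:ℕ):ℝ)))^(n-(k+1)-j) * ((n-(k+1)).choose j : ℝ)) with hT
  set W : ℕ → ℝ := fun j => if j = n then 0
    else (n.choose j : ℝ) * (x+y+(n:ℝ))^j * (-(-x)^(n-j)) with hW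
  rw [Finset.sum_range_succ']
  have step1 : ∑ k ∈ Finset.range n,
      ((n.choose (k+1) : ℝ) * G x (k+1) * (y + ((n - (k+1) : ℕ):ℝ)) ^ (n - (k+1)))
      = ∑ k ∈ Finset.range n, ∑ j ∈ Finset.range (n+1), T k j := by
    refine Finset.sum_congr rfl fun k hk => ?_
    have hk' : k + 1 ≤ n := by simpa using hk
    have hbin : (y + ((n - (k+1) : ℕ):ℝ)) ^ (n-(k+1))
        = ∑ j ∈ Finset.range (n-(k+1)+1),
          (x+y+(n:ℝ))^j * (-(x+((k+1:ℕ):ℝ)))^(n-(k+1)-j) * ((n-(k+1)).choose j : ℝ) := by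
      rw [← add_pow]
      congr 1
      push_cast [hk']
      ring
    rw [G_succ, hbin, Finset.mul_sum]
    refine (Finset.sum_subset (Finset.range_subset_range.mpr (by omega)) fun j hj hj' => ?_)
    simp only [Finset.mem_range] at hj hj'
    have : n - (k+1) < j := by omega
    simp [hT, Nat.choose_eq_zero_of_lt this]
  rw [step1, Finset.sum_comm]
  have step3 : ∀ j ∈ Finset.range (n+1), ∑ k ∈ Finset.range n, T k j = W j := by
    intro j hj
    have hjn : j ≤ n := by simpa [Nat.lt_succ_iff] using hj
    have hrestrict : ∑ k ∈ Finset.range n, T k j = ∑ k ∈ Finset.range (n-j), T k j := by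
      refine (Finset.sum_subset (Finset.range_subset_range.mpr (by omega)) fun k hk hk' => ?_).symm
      simp only [Finset.mem_range] at hk hk'
      have : n - (k+1) < j := by omega
      simp [hT, Nat.choose_eq_zero_of_lt this]
    rw [hrestrict]
    rcases eq_or_ne j n with rfl | hjne
    · simp [hW]
    · have hjlt : j < n := lt_of_le_of_ne hjn hjne
      have hterm : ∀ k ∈ Finset.range (n-j), T k j
          = ((n.choose j : ℝ) * (x+y+(n:ℝ))^j * (-1)^(n-1-j) * x) *
            ((-1:ℝ)^k * ((n-j).choose (k+1) : ℝ) * (x+((k+1:ℕ):ℝ))^(n-1-j)) := by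
        intro k hk
        have hk' : k < n - j := by simpa using hk
        have hch : (n.choose (k+1) : ℝ) * ((n-(k+1)).choose j : ℝ)
            = (n.choose j : ℝ) * ((n-j).choose (k+1) : ℝ) := by
          exact_mod_cast congrArg (Nat.cast (R := ℝ)) (choose_mul_choose_sub (by omega))
        have hneg : (-(x+((k+1:ℕ):ℝ)))^(n-(k+1)-j)
            = (-1:ℝ)^(n-(k+1)-j) * (x+((k+1:ℕ):ℝ))^(n-(k+1)-j) := by
          rw [neg_pow]
        have hsign : (-1:ℝ)^(n-(k+1)-j) = (-1)^(n-1-j) * (-1)^k := by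
          rw [show n-(k+1)-j = (n-1-j) - k by omega, negpow_sub (by omega)]
        have hpow : (x+((k+1:ℕ):ℝ))^k * (x+((k+1:ℕ):ℝ))^(n-(k+1)-j)
            = (x+((k+1:ℕ):ℝ))^(n-1-j) := by
          rw [← pow_add]; congr 1; omega
        rw [hT]
        simp only
        rw [hneg, hsign]
        calc (n.choose (k+1) : ℝ) * (x * (x + ((k+1:ℕ):ℝ))^k) *
              ((x+y+(n:ℝ))^j * (((-1:ℝ)^(n-1-j) * (-1)^k) * (x+((k+1:ℕ):ℝ))^(n-(k+1)-j)) *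
                ((n-(k+1)).choose j : ℝ))
            = ((n.choose (k+1) : ℝ) * ((n-(k+1)).choose j : ℝ)) *
              ((x+y+(n:ℝ))^j * (-1)^(n-1-j) * x) *
              ((-1:ℝ)^k * ((x+((k+1:ℕ):ℝ))^k * (x+((k+1:ℕ):ℝ))^(n-(k+1)-j))) := by ring
        _ = _ := by rw [hch, hpow]; ring
      rw [Finset.sum_congr rfl hterm, ← Finset.mul_sum]
      have inner : ∑ k ∈ Finset.range (n-j),
          ((-1:ℝ)^k * ((n-j).choose (k+1) : ℝ) * (x+((k+1:ℕ):ℝ))^(n-1-j)) = x^(n-1-j) := by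
        have h0 := fd0 (n-j) (X^(n-1-j))
          (by rw [Polynomial.degree_X_pow]; exact_mod_cast (by omega : n-1-j < n-j)) x
        rw [Finset.sum_range_succ'] at h0
        simp only [Polynomial.eval_pow, Polynomial.eval_X, Nat.cast_zero, add_zero,
          pow_zero, Nat.choose_zero_right, Nat.cast_one, one_mul, mul_one] at h0
        have h1 : ∑ k ∈ Finset.range (n-j),
            ((-1:ℝ)^(k+1) * ((n-j).choose (k+1) : ℝ) * (x+((k+1:ℕ):ℝ))^(n-1-j))
            = -x^(n-1-j) := by linarith [h0]
        have h2 : ∀ k ∈ Finset.range (n-j),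
            ((-1:ℝ)^(k+1) * ((n-j).choose (k+1) : ℝ) * (x+((k+1:ℕ):ℝ))^(n-1-j))
            = -((-1:ℝ)^k * ((n-j).choose (k+1) : ℝ) * (x+((k+1:ℕ):ℝ))^(n-1-j)) := by
          intro k _; ring
        rw [Finset.sum_congr rfl h2, Finset.sum_neg_distrib] at h1
        linarith [h1]
      rw [inner, hW]
      simp only [if_neg hjne]
      have e1 : (-x)^(n-j) = (-1:ℝ)^(n-j) * x^(n-j) := by rw [neg_pow]
      have e2 : x * x^(n-1-j) = x^(n-j) := by rw [← pow_succ']; congr 1; omega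
      have e3 : (-1:ℝ)^(n-j) = -(-1:ℝ)^(n-1-j) := by
        rw [show n-j = (n-1-j)+1 by omega, pow_succ]; ring
      rw [e1, e3]
      rw [← e2]
      ring
  rw [Finset.sum_congr rfl step3]
  have step4 : ∑ j ∈ Finset.range (n+1), W j = (x+y+(n:ℝ))^n - (y+(n:ℝ))^n := by
    rw [Finset.sum_range_succ]
    have hWn : W n = 0 := by simp [hW]
    have hWj : ∀ j ∈ Finset.range n, W j
        = -((x+y+(n:ℝ))^j * (-x)^(n-j) * (n.choose j : ℝ)) := by
      intro j hj
      have : j ≠ n := by simp at hj; omega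
      simp only [hW, if_neg this]
      ring
    rw [hWn, add_zero, Finset.sum_congr rfl hWj, Finset.sum_neg_distrib]
    have hap := add_pow (x+y+(n:ℝ)) (-x) n
    rw [Finset.sum_range_succ] at hap
    have : (x+y+(n:ℝ)) + (-x) = y + n := by ring
    rw [this] at hap
    simp only [Nat.sub_self, pow_zero, mul_one, Nat.choose_self, Nat.cast_one] at hap
    linarith [hap]
  rw [step4]
  have hf0 : (n.choose 0 : ℝ) * G x 0 * (y + ((n - 0:ℕ):ℝ))^(n-0) = (y + (n:ℝ))^n := by
    simp
  rw [hf0]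
  ring
lemma hurwitz (n : ℕ) (x y : ℝ) :
    ∑ k ∈ Finset.range (n+1), (n.choose k : ℝ) * G x k * G y (n-k) = G (x+y) n := by
  rcases n with _ | m
  · simp
  set n := m + 1 with hn
  have hGy : ∀ k ∈ Finset.range (n+1), (n.choose k : ℝ) * G x k * G y (n-k)
      = (n.choose k : ℝ) * G x k * (y + ((n-k:ℕ):ℝ))^(n-k)
        - (n.choose k : ℝ) * ((n-k:ℕ):ℝ) * G x k * (y + ((n-k:ℕ):ℝ))^(n-k-1) := by
    intro k hk
    rcases Nat.eq_zero_or_pos (n - k) with h0 | hpos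
    · simp [h0]
    · obtain ⟨l, hl⟩ : ∃ l, n - k = l + 1 := ⟨n - k - 1, by omega⟩
      rw [hl, G_succ]
      have : (y + ((l+1:ℕ):ℝ))^(l+1) = (y + ((l+1:ℕ):ℝ))^l * (y + ((l+1:ℕ):ℝ)) := pow_succ _ _
      rw [show l + 1 - 1 = l from rfl, this]
      push_cast
      ring
  rw [Finset.sum_congr rfl hGy, Finset.sum_sub_distrib, abelA]
  have hB : ∑ k ∈ Finset.range (n+1),
      (n.choose k : ℝ) * ((n-k:ℕ):ℝ) * G x k * (y + ((n-k:ℕ):ℝ))^(n-k-1)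
      = (n:ℝ) * (x + y + n)^m := by
    rw [Finset.sum_range_succ]
    simp only [Nat.sub_self, Nat.cast_zero, mul_zero, zero_mul, mul_one, add_zero]
    have hterm : ∀ k ∈ Finset.range n,
        (n.choose k : ℝ) * ((n-k:ℕ):ℝ) * G x k * (y + ((n-k:ℕ):ℝ))^(n-k-1)
        = (n:ℝ) * ((m.choose k : ℝ) * G x k * ((y+1) + ((m-k:ℕ):ℝ))^(m-k)) := by
      intro k hk
      have hk' : k < n := by simpa using hk
      have hch : (n:ℕ) * m.choose k = n.choose k * (n - k) := by
        rw [hn, Nat.add_one_mul_choose_eq m k, Nat.choose_succ_right_eq]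
      have hcast : (y + ((n-k:ℕ):ℝ)) = (y+1) + ((m-k:ℕ):ℝ) := by
        push_cast [show k ≤ m by omega, show k ≤ n by omega]
        rw [hn]; push_cast; ring
      have hexp : n - k - 1 = m - k := by omega
      rw [hcast, hexp]
      have hchR : ((n.choose k : ℝ)) * ((n-k:ℕ):ℝ) = (n:ℝ) * (m.choose k : ℝ) := by
        exact_mod_cast congrArg (Nat.cast (R := ℝ)) hch.symm
      linear_combination (G x k * ((y+1) + ((m-k:ℕ):ℝ))^(m-k)) * hchR
    rw [Finset.sum_congr rfl hterm, ← Finset.mul_sum, abelA m x (y+1)]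
    rw [hn]
    push_cast
    ring_nf
  rw [hB]
  have : G (x+y) n = (x+y) * ((x+y) + ((n:ℕ):ℝ))^m := G_succ (x+y) m
  rw [this]
  have hpow : (x + y + (n:ℝ))^n = (x+y+(n:ℝ))^m * (x+y+(n:ℝ)) := pow_succ _ _
  rw [hpow]
  push_cast
  ring

noncomputable def Fc (a : ℝ) (k : ℕ) : ℝ := G a k / (Nat.factorial k)

@[simp] lemma Fc_zero (a : ℝ) : Fc a 0 = 1 := by simp [Fc]

lemma Fc_conv (n : ℕ) (x y : ℝ) :
    ∑ k ∈ Finset.range (n+1), Fc x k * Fc y (n-k) = Fc (x+y) n := by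
  have h := hurwitz n x y
  have hterm : ∀ k ∈ Finset.range (n+1),
      (n.choose k : ℝ) * G x k * G y (n-k) = (Nat.factorial n : ℝ) * (Fc x k * Fc y (n-k)) := by
    intro k hk
    have hk' : k ≤ n := by simpa [Nat.lt_succ_iff] using hk
    rw [Nat.cast_choose ℝ hk']
    simp only [Fc]
    have h1 : (Nat.factorial k : ℝ) ≠ 0 := by exact_mod_cast (Nat.factorial_pos k).ne'
    have h2 : (Nat.factorial (n-k) : ℝ) ≠ 0 := by exact_mod_cast (Nat.factorial_pos (n-k)).ne'
    have h3 : (Nat.factorial n : ℝ) ≠ 0 := by exact_mod_cast (Nat.factorial_pos n).ne'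
    field_simp
  rw [Finset.sum_congr rfl hterm, ← Finset.mul_sum] at h
  have h3 : (Nat.factorial n : ℝ) ≠ 0 := by exact_mod_cast (Nat.factorial_pos n).ne'
  rw [Fc]
  field_simp at h ⊢
  linarith [h]

lemma Fc_prod {ι : Type*} [DecidableEq ι] (a : ℝ) (s : Finset ι) :
    ∀ n : ℕ, ∑ f ∈ s.piAntidiag n, ∏ i ∈ s, Fc a (f i) = Fc ((s.card : ℝ) * a) n := by
  induction s using Finset.cons_induction with
  | empty =>
    intro n
    rcases eq_or_ne n 0 with rfl | hn
    · simp
    · rw [Finset.piAntidiag_empty_of_ne_zero hn]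
      simp only [Finset.sum_empty, Finset.card_empty, Nat.cast_zero, zero_mul]
      rw [Fc, G]
      simp [hn]
  | cons i s hi ih =>
    intro n
    rw [Finset.piAntidiag_cons, Finset.sum_disjiUnion]
    have hinner : ∀ p ∈ Finset.HasAntidiagonal.antidiagonal n,
        ∑ f ∈ (s.piAntidiag p.2).map
          (addRightEmbedding fun t => if t = i then p.1 else 0),
          ∏ t ∈ Finset.cons i s hi, Fc a (f t)
        = Fc a p.1 * Fc ((s.card : ℝ) * a) p.2 := by
      intro p hp
      rw [Finset.sum_map]
      have hterm : ∀ g ∈ s.piAntidiag p.2,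
          ∏ t ∈ Finset.cons i s hi,
            Fc a ((addRightEmbedding fun t => if t = i then p.1 else 0) g t)
          = Fc a p.1 * ∏ t ∈ s, Fc a (g t) := by
        intro g hg
        rw [Finset.mem_piAntidiag] at hg
        have hgi : g i = 0 := by
          by_contra h
          exact hi (hg.2 i h)
        rw [Finset.prod_cons]
        simp only [addRightEmbedding_apply, Pi.add_apply]
        congr 1
        · rw [hgi]; simp
        · refine Finset.prod_congr rfl fun t ht => ?_
          have : t ≠ i := fun h => hi (h ▸ ht)
          rw [if_neg this, add_zero]
      rw [Finset.sum_congr rfl hterm, ← Finset.mul_sum, ih p.2]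
    rw [Finset.sum_congr rfl hinner,
      Finset.Nat.sum_antidiagonal_eq_sum_range_succ (fun u v => Fc a u * Fc ((s.card : ℝ) * a) v),
      Fc_conv]
    have : (((Finset.cons i s hi).card : ℕ) : ℝ) * a = a + (s.card : ℝ) * a := by
      rw [Finset.card_cons]; push_cast; ring
    rw [this]
lemma tuple_eq_pi (p n : ℕ) :
    Finset.Nat.antidiagonalTuple p n = Finset.piAntidiag (Finset.univ : Finset (Fin p)) n := by
  ext f
  simp [Finset.Nat.mem_antidiagonalTuple]

theorem coefficient_identity (n p q : ℕ) (hn : 0 < n) (hp : 0 < p) (hq : 0 < q) :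
    ∑ j ∈ Finset.Nat.antidiagonalTuple p n,
      ∏ t, (q : ℝ) * ((j t : ℝ) * p + q) ^ ((j t : ℤ) - 1) /
        (p ^ (j t) * (Nat.factorial (j t) : ℝ))
      = ∑ i ∈ Finset.Nat.antidiagonalTuple q n,
        ∏ t, ((i t : ℝ) + 1) ^ ((i t : ℤ) - 1) / (Nat.factorial (i t) : ℝ) := by
  have hpR : (p:ℝ) ≠ 0 := by positivity
  have hqR : (q:ℝ) ≠ 0 := by positivity
  have factorL : ∀ j : ℕ, (q : ℝ) * ((j : ℝ) * p + q) ^ ((j : ℤ) - 1) /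
      (p ^ j * (Nat.factorial j : ℝ)) = Fc ((q:ℝ)/p) j := by
    intro j
    rcases j with _ | m
    · simp [zpow_neg, hqR]
    · have he : ((m+1:ℕ) : ℤ) - 1 = (m : ℤ) := by push_cast; ring
      rw [he, zpow_natCast, Fc, G_succ]
      have hfac : (Nat.factorial (m+1) : ℝ) ≠ 0 := by
        exact_mod_cast (Nat.factorial_pos (m+1)).ne'
      have hbase : (q:ℝ)/p + ((m+1:ℕ):ℝ) = (((m+1:ℕ):ℝ) * p + q) / p := by
        field_simp
        ring
      rw [hbase, div_pow]
      have hppow : ((p:ℝ))^(m+1) ≠ 0 := pow_ne_zero _ hpR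
      have hpm : ((p:ℝ))^m ≠ 0 := pow_ne_zero _ hpR
      field_simp
      ring
  have factorR : ∀ i : ℕ, ((i : ℝ) + 1) ^ ((i : ℤ) - 1) / (Nat.factorial i : ℝ)
      = Fc 1 i := by
    intro i
    rcases i with _ | m
    · norm_num
    · have he : ((m+1:ℕ) : ℤ) - 1 = (m : ℤ) := by push_cast; ring
      rw [he, zpow_natCast, Fc, G_succ, one_mul, add_comm (1:ℝ)]
  calc ∑ j ∈ Finset.Nat.antidiagonalTuple p n,
      ∏ t, (q : ℝ) * ((j t : ℝ) * p + q) ^ ((j t : ℤ) - 1) /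
        (p ^ (j t) * (Nat.factorial (j t) : ℝ))
      = ∑ j ∈ Finset.piAntidiag (Finset.univ : Finset (Fin p)) n,
        ∏ t, Fc ((q:ℝ)/p) (j t) := by
        rw [tuple_eq_pi]
        exact Finset.sum_congr rfl fun j _ => Finset.prod_congr rfl fun t _ => factorL (j t)
    _ = Fc (((Finset.univ : Finset (Fin p)).card : ℝ) * ((q:ℝ)/p)) n := Fc_prod _ _ n
    _ = Fc ((q:ℝ)) n := by
        rw [Finset.card_univ, Fintype.card_fin]
        congr 1
        field_simp
    _ = Fc (((Finset.univ : Finset (Fin q)).card : ℝ) * 1) n := by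
        rw [Finset.card_univ, Fintype.card_fin, mul_one]
    _ = ∑ i ∈ Finset.piAntidiag (Finset.univ : Finset (Fin q)) n, ∏ t, Fc 1 (i t) :=
        (Fc_prod _ _ n).symm
    _ = _ := by
        rw [tuple_eq_pi]
        exact Finset.sum_congr rfl fun i _ => Finset.prod_congr rfl fun t _ => (factorR (i t)).symm
end

section
/- For every positive real number m, the power series ∑_{k=0}^∞ (km+1)^{k-1} x^k/(m^k k!) has radius of convergence exactly 1/e: it converges absolutely for every real x with |x| < 1/e and diverges for every real x with |x| > 1/e. -/
open Filter Real Topology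

private lemma rc_ratio_eq' (m x : ℝ) (hm : 0 < m) (n : ℕ) :
    (((↑(n+2) : ℝ) * m + 1) ^ ((n+2) - 1) * x ^ (n+2) / (m ^ (n+2) * (Nat.factorial (n+2) : ℝ))) =
    (x * ((1 + m / ((↑(n+1) : ℝ) * m + 1)) ^ (n+1) * (((↑(n+1) : ℝ) * m + 1) / (m * ((↑(n+1) : ℝ) + 1))))) *
      (((↑(n+1) : ℝ) * m + 1) ^ ((n+1) - 1) * x ^ (n+1) / (m ^ (n+1) * (Nat.factorial (n+1) : ℝ))) := by
  have hD : (0:ℝ) < (↑(n+1):ℝ)*m+1 := by positivity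
  have hfac : (Nat.factorial (n+1) : ℝ) ≠ 0 := Nat.cast_ne_zero.mpr (Nat.factorial_ne_zero _)
  have hfs : (Nat.factorial (n+2) : ℝ) = ((n:ℝ)+2) * (Nat.factorial (n+1) : ℝ) := by
    rw [Nat.factorial_succ]; push_cast; ring
  have h2 : (↑(n+2):ℝ)*m + 1 = ((↑(n+1):ℝ)*m+1) + m := by push_cast; ring
  have h1 : (1 : ℝ) + m / ((↑(n+1):ℝ)*m+1) = (((↑(n+1):ℝ)*m+1) + m) / ((↑(n+1):ℝ)*m+1) := by
    field_simp
  rw [show n + 2 - 1 = n + 1 by omega]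
  simp only [Nat.add_sub_cancel, h2, h1, hfs, div_pow]
  field_simp
  push_cast
  ring

private lemma rc_aux_tendsto (m : ℝ) (hm : 0 < m) :
    Tendsto (fun k : ℕ => (1 + m / ((k : ℝ) * m + 1)) ^ k * (((k : ℝ) * m + 1) / (m * ((k : ℝ) + 1))))
      atTop (𝓝 (Real.exp 1)) := by
  set D : ℕ → ℝ := fun k => (k : ℝ) * m + 1 with hD
  have hDpos : ∀ k, 0 < D k := fun k => by positivity
  have hDtop : Tendsto D atTop atTop := by
    apply tendsto_atTop_add_const_right
    exact (tendsto_natCast_atTop_atTop).atTop_mul_const hm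
  set u : ℕ → ℝ := fun k => m / D k with hu
  have hupos : ∀ k, 0 < u k := fun k => div_pos hm (hDpos k)
  have hu0 : Tendsto u atTop (𝓝 0) := tendsto_const_nhds.div_atTop hDtop
  have hderiv : HasDerivAt (fun y : ℝ => Real.log (1 + y)) 1 0 := by
    have h1 : HasDerivAt (fun y : ℝ => 1 + y) 1 0 := (hasDerivAt_id 0).const_add 1
    have := (Real.hasDerivAt_log (by norm_num : (1:ℝ) + 0 ≠ 0)).comp 0 h1
    rw [show ((1:ℝ) + 0)⁻¹ * 1 = 1 by norm_num] at this
    exact this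
  have hslope : Tendsto (fun y : ℝ => Real.log (1 + y) / y) (𝓝[≠] (0:ℝ)) (𝓝 1) := by
    have := hasDerivAt_iff_tendsto_slope.mp hderiv
    refine this.congr' ?_
    filter_upwards [self_mem_nhdsWithin] with y hy
    simp [slope_def_field, div_eq_inv_mul]
  have hu0' : Tendsto u atTop (𝓝[≠] (0:ℝ)) :=
    tendsto_nhdsWithin_of_tendsto_nhds_of_eventually_within _ hu0
      (Eventually.of_forall fun k => (hupos k).ne')
  have hlogu : Tendsto (fun k => Real.log (1 + u k) / u k) atTop (𝓝 1) := hslope.comp hu0'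
  have hku : Tendsto (fun k : ℕ => (k : ℝ) * u k) atTop (𝓝 1) := by
    have h1 : Tendsto (fun k : ℕ => 1 - 1 / D k) atTop (𝓝 (1 - 0)) :=
      tendsto_const_nhds.sub (tendsto_const_nhds.div_atTop hDtop)
    rw [sub_zero] at h1
    refine h1.congr fun k => ?_
    have := (hDpos k).ne'
    simp only [hu, hD]
    field_simp
    ring
  have hinner : Tendsto (fun k : ℕ => (k : ℝ) * Real.log (1 + u k)) atTop (𝓝 1) := by
    have := hku.mul hlogu
    rw [mul_one] at this
    refine this.congr fun k => ?_
    field_simp [(hupos k).ne']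
  have hg : Tendsto (fun k : ℕ => (1 + u k) ^ k) atTop (𝓝 (Real.exp 1)) := by
    have := (Real.continuous_exp.tendsto 1).comp hinner
    refine this.congr fun k => ?_
    simp only [Function.comp_apply]
    rw [Real.exp_nat_mul, Real.exp_log (by linarith [hupos k])]
  have hh : Tendsto (fun k : ℕ => D k / (m * ((k : ℝ) + 1))) atTop (𝓝 1) := by
    have hn : Tendsto (fun k : ℕ => m + 1 / (k : ℝ)) atTop (𝓝 (m + 0)) :=
      tendsto_const_nhds.add tendsto_one_div_atTop_nhds_zero_nat
    have hd : Tendsto (fun k : ℕ => m + m / (k : ℝ)) atTop (𝓝 (m + 0)) :=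
      tendsto_const_nhds.add (tendsto_const_nhds.div_atTop tendsto_natCast_atTop_atTop)
    rw [add_zero] at hn hd
    have := hn.div hd hm.ne'
    rw [div_self hm.ne'] at this
    refine this.congr' ?_
    filter_upwards [eventually_ge_atTop 1] with k hk
    have hk0 : (k : ℝ) ≠ 0 := Nat.cast_ne_zero.mpr (by omega)
    simp only [Pi.div_apply]
    field_simp [hD]
    ring
  have := hg.mul hh
  rwa [mul_one] at this

private lemma rc_main_tendsto (m x : ℝ) (hm : 0 < m) (hx : x ≠ 0) :
    Tendsto (fun k : ℕ =>
        ‖((↑(k+1) : ℝ) * m + 1) ^ ((k+1) - 1) * x ^ (k+1) / (m ^ (k+1) * (Nat.factorial (k+1) : ℝ))‖ /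
        ‖((k : ℝ) * m + 1) ^ (k - 1) * x ^ k / (m ^ k * (Nat.factorial k : ℝ))‖)
      atTop (𝓝 (|x| * Real.exp 1)) := by
  have h := (tendsto_const_nhds (x := |x|) (f := atTop (α := ℕ))).mul (rc_aux_tendsto m hm)
  refine h.congr' ?_
  filter_upwards [eventually_ge_atTop 1] with k hk
  obtain ⟨n, rfl⟩ : ∃ n, k = n + 1 := ⟨k - 1, (Nat.succ_pred_eq_of_pos hk).symm⟩
  have hD : (0:ℝ) < (↑(n+1):ℝ)*m+1 := by positivity
  have ht : ((↑(n+1) : ℝ) * m + 1) ^ ((n+1) - 1) * x ^ (n+1) / (m ^ (n+1) * (Nat.factorial (n+1) : ℝ)) ≠ 0 := by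
    have hfac : (Nat.factorial (n+1) : ℝ) ≠ 0 := Nat.cast_ne_zero.mpr (Nat.factorial_ne_zero _)
    positivity
  have hc : 0 < (1 + m / ((↑(n+1) : ℝ) * m + 1)) ^ (n+1) * (((↑(n+1) : ℝ) * m + 1) / (m * ((↑(n+1) : ℝ) + 1))) := by
    positivity
  rw [show n + 1 + 1 = n + 2 from rfl, rc_ratio_eq' m x hm n, Real.norm_eq_abs, Real.norm_eq_abs,
    abs_mul, abs_mul, mul_div_assoc, div_self (abs_ne_zero.mpr ht), mul_one, abs_of_pos hc]

theorem radius_of_convergence (m : ℝ) (hm : 0 < m) :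
    (∀ x : ℝ, |x| < 1 / Real.exp 1 →
      Summable (fun k : ℕ =>
        |((k : ℝ) * m + 1) ^ (k - 1) * x ^ k / (m ^ k * (Nat.factorial k : ℝ))|)) ∧
    (∀ x : ℝ, 1 / Real.exp 1 < |x| →
      ¬ Summable (fun k : ℕ =>
        ((k : ℝ) * m + 1) ^ (k - 1) * x ^ k / (m ^ k * (Nat.factorial k : ℝ)))) := by
  constructor
  · intro x hx
    rcases eq_or_ne x 0 with rfl | hx0
    · apply summable_of_ne_finset_zero (s := {0})
      intro k hk
      simp only [Finset.mem_singleton] at hk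
      simp [zero_pow hk]
    · have hl : |x| * Real.exp 1 < 1 := by
        rw [lt_div_iff₀ (Real.exp_pos 1)] at hx
        exact hx
      refine summable_of_ratio_test_tendsto_lt_one hl ?_ ?_
      · refine Eventually.of_forall fun k => ?_
        have hD : (0:ℝ) < (k:ℝ)*m+1 := by positivity
        have hfac : (Nat.factorial k : ℝ) ≠ 0 := Nat.cast_ne_zero.mpr (Nat.factorial_ne_zero _)
        have : ((k : ℝ) * m + 1) ^ (k - 1) * x ^ k / (m ^ k * (Nat.factorial k : ℝ)) ≠ 0 := by
          positivity
        simpa using this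
      · have := rc_main_tendsto m x hm hx0
        refine this.congr fun k => ?_
        simp only [Real.norm_eq_abs, abs_abs]
  · intro x hx
    have hx0 : x ≠ 0 := by
      intro h
      rw [h, abs_zero] at hx
      exact absurd hx (not_lt.mpr (by positivity))
    have hl : 1 < |x| * Real.exp 1 := by
      rw [div_lt_iff₀ (Real.exp_pos 1)] at hx
      exact hx
    exact not_summable_of_ratio_test_tendsto_gt_one hl (rc_main_tendsto m x hm hx0)
end
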